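/- arXiv:1601.04088 — 5 statements merged into one kernel-verified Lean document; each statement's English description precedes it below -/
import Mathlib

section
/- If f is a Lebesgue integrable non-negative real-valued function on (0,1) and ε > 0, then the integral over (0,1)^∞ (with respect to the infinite product of Lebesgue measure) of the function (x_i)_{i∈ℕ} ↦ ( (1/N) Σ_{k=1}^N ( f(x_k)·χ_{{x : f(x) < kε}}(x_k) − ∫_{{x : f(x) < kε}} f(x) dx ) )² is at most 2ε ∫_0^1 f(x) dx, for every N ∈ ℕ. -/
open MeasureTheory Filter

lemma aux_variance_bound
    (Ω : Type*) [MeasurableSpace Ω] (P : Measure Ω) [IsProbabilityMeasure P]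
    (X : ℕ → Ω → ℝ) (hmeas : ∀ k, Measurable (X k))
    (hindep : ProbabilityTheory.iIndepFun X P)
    (hunif : ∀ k, Measure.map (X k) P = volume.restrict (Set.Ioo 0 1))
    (f : ℝ → ℝ) (hf_meas : Measurable f) (hf_int : IntegrableOn f (Set.Ioo 0 1))
    (hf_nonneg : ∀ x, 0 ≤ f x)
    (ε : ℝ) (hε : 0 < ε) (N : ℕ) (hN : 0 < N) :
    ∫ ω, ((N : ℝ)⁻¹ * ∑ k ∈ Finset.Icc 1 N,
        (Set.indicator {x : ℝ | f x < (k : ℝ) * ε} f (X k ω)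
          - ∫ x in Set.Ioo 0 1 ∩ {x : ℝ | f x < (k : ℝ) * ε}, f x)) ^ 2 ∂P
      ≤ 2 * ε * ∫ x in Set.Ioo (0:ℝ) 1, f x := by
  set μ : Measure ℝ := volume.restrict (Set.Ioo 0 1) with hμ
  haveI : IsFiniteMeasure μ := by
    constructor
    rw [hμ, Measure.restrict_apply_univ, Real.volume_Ioo]
    simp
  set I : ℝ := ∫ x in Set.Ioo (0:ℝ) 1, f x with hIdef
  have hI0 : 0 ≤ I := setIntegral_nonneg measurableSet_Ioo fun x _ => hf_nonneg x
  have hAmeas : ∀ k : ℕ, MeasurableSet {x : ℝ | f x < (k : ℝ) * ε} :=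
    fun k => measurableSet_lt hf_meas measurable_const
  set g : ℕ → ℝ → ℝ := fun k => Set.indicator {x : ℝ | f x < (k : ℝ) * ε} f with hgdef
  have hgmeas : ∀ k, Measurable (g k) := fun k => hf_meas.indicator (hAmeas k)
  have hg_nonneg : ∀ k x, 0 ≤ g k x := fun k x =>
    Set.indicator_nonneg (fun y _ => hf_nonneg y) x
  have hg_le : ∀ k x, g k x ≤ (k : ℝ) * ε := by
    intro k x
    by_cases h : x ∈ {x : ℝ | f x < (k : ℝ) * ε}
    · simpa [hgdef, Set.indicator_of_mem h] using le_of_lt h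
    · simp only [hgdef, Set.indicator_of_notMem h]
      positivity
  have hg_le_f : ∀ k x, g k x ≤ f x := by
    intro k x
    by_cases h : x ∈ {x : ℝ | f x < (k : ℝ) * ε}
    · simp [hgdef, Set.indicator_of_mem h]
    · simp only [hgdef, Set.indicator_of_notMem h]
      exact hf_nonneg x
  set Z : ℕ → Ω → ℝ := fun k ω => g k (X k ω) with hZdef
  have hZmeas : ∀ k, Measurable (Z k) := fun k => (hgmeas k).comp (hmeas k)
  have hZℒ2 : ∀ k, MemLp (Z k) 2 P := fun k =>
    memLp_of_bounded (ae_of_all _ fun ω => ⟨hg_nonneg k _, hg_le k _⟩)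
      (hZmeas k).aestronglyMeasurable 2
  have hZint : ∀ k, Integrable (Z k) P := fun k => (hZℒ2 k).integrable one_le_two
  have hgℒ2 : ∀ k, MemLp (g k) 2 μ := fun k =>
    memLp_of_bounded (ae_of_all _ fun x => ⟨hg_nonneg k _, hg_le k _⟩)
      (hgmeas k).aestronglyMeasurable 2
  have hgint : ∀ k, Integrable (g k) μ := fun k => (hgℒ2 k).integrable one_le_two
  -- the centering constants are the expectations of the `Z k`
  have hc : ∀ k : ℕ, (∫ x in Set.Ioo 0 1 ∩ {x : ℝ | f x < (k : ℝ) * ε}, f x)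
      = ∫ ω, Z k ω ∂P := by
    intro k
    have h1 : ∫ ω, Z k ω ∂P = ∫ y, g k y ∂(Measure.map (X k) P) :=
      (integral_map (hmeas k).aemeasurable (hgmeas k).aestronglyMeasurable).symm
    rw [h1, hunif k]
    simp only [hgdef]
    rw [integral_indicator (hAmeas k)]
    rw [hμ, Measure.restrict_restrict (hAmeas k), Set.inter_comm]
  set T : Ω → ℝ := ∑ k ∈ Finset.Icc 1 N, Z k with hTdef
  have hT_apply : ∀ ω, T ω = ∑ k ∈ Finset.Icc 1 N, Z k ω := by
    intro ω; rw [hTdef]; simp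
  have hTmem : MemLp T 2 P := memLp_finsetSum' _ fun k _ => hZℒ2 k
  have hTint : ∫ ω, T ω ∂P = ∑ k ∈ Finset.Icc 1 N, ∫ ω, Z k ω ∂P := by
    simp_rw [hT_apply]
    exact integral_finset_sum _ fun k _ => hZint k
  -- rewrite the integrand
  have hrw : ∫ ω, ((N : ℝ)⁻¹ * ∑ k ∈ Finset.Icc 1 N,
        (Set.indicator {x : ℝ | f x < (k : ℝ) * ε} f (X k ω)
          - ∫ x in Set.Ioo 0 1 ∩ {x : ℝ | f x < (k : ℝ) * ε}, f x)) ^ 2 ∂P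
      = ((N : ℝ)⁻¹) ^ 2 * ∫ ω, (T ω - ∫ ω', T ω' ∂P) ^ 2 ∂P := by
    rw [← integral_const_mul]
    congr 1
    funext ω
    rw [mul_pow]
    congr 2
    rw [hT_apply, hTint, ← Finset.sum_sub_distrib]
    exact Finset.sum_congr rfl fun k _ => by rw [hc k]
  rw [hrw]
  -- the inner integral is the variance of T
  have hvar : ∫ ω, (T ω - ∫ ω', T ω' ∂P) ^ 2 ∂P = ProbabilityTheory.variance T P := by
    rw [ProbabilityTheory.variance_eq_integral hTmem.aestronglyMeasurable.aemeasurable]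
  rw [hvar]
  have hvs : ProbabilityTheory.variance T P
      = ∑ k ∈ Finset.Icc 1 N, ProbabilityTheory.variance (Z k) P := by
    rw [hTdef]
    refine ProbabilityTheory.IndepFun.variance_sum (fun k _ => hZℒ2 k) ?_
    intro i _ j _ hij
    exact (hindep.indepFun hij).comp (hgmeas i) (hgmeas j)
  rw [hvs]
  -- bound each variance
  have hvk : ∀ k ∈ Finset.Icc 1 N, ProbabilityTheory.variance (Z k) P ≤ (k : ℝ) * ε * I := by
    intro k _
    have h1 : ProbabilityTheory.variance (Z k) P ≤ ∫ ω, (Z k ω) ^ 2 ∂P := by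
      have := ProbabilityTheory.variance_le_expectation_sq (hZmeas k).aestronglyMeasurable (μ := P)
      simpa using this
    have h2 : ∫ ω, (Z k ω) ^ 2 ∂P = ∫ y, (g k y) ^ 2 ∂μ := by
      rw [← hunif k]
      exact (integral_map (hmeas k).aemeasurable
        (((hgmeas k).pow_const 2).aestronglyMeasurable)).symm
    have h3 : ∫ y, (g k y) ^ 2 ∂μ ≤ ∫ y, (k : ℝ) * ε * g k y ∂μ := by
      refine integral_mono (hgℒ2 k).integrable_sq ((hgint k).const_mul _) ?_
      intro y
      have := mul_le_mul_of_nonneg_right (hg_le k y) (hg_nonneg k y)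
      simpa [pow_two] using this
    have h4 : ∫ y, (k : ℝ) * ε * g k y ∂μ = (k : ℝ) * ε * ∫ y, g k y ∂μ :=
      integral_const_mul _ _
    have h5 : ∫ y, g k y ∂μ ≤ I := by
      rw [hIdef]
      exact integral_mono (hgint k) hf_int fun y => hg_le_f k y
    calc ProbabilityTheory.variance (Z k) P ≤ ∫ ω, (Z k ω) ^ 2 ∂P := h1
      _ = ∫ y, (g k y) ^ 2 ∂μ := h2
      _ ≤ ∫ y, (k : ℝ) * ε * g k y ∂μ := h3
      _ = (k : ℝ) * ε * ∫ y, g k y ∂μ := h4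
      _ ≤ (k : ℝ) * ε * I := by
          refine mul_le_mul_of_nonneg_left h5 ?_
          positivity
  have hsum : ∑ k ∈ Finset.Icc 1 N, ProbabilityTheory.variance (Z k) P
      ≤ (N : ℝ) * ((N : ℝ) * ε * I) := by
    calc ∑ k ∈ Finset.Icc 1 N, ProbabilityTheory.variance (Z k) P
        ≤ ∑ k ∈ Finset.Icc 1 N, (k : ℝ) * ε * I := Finset.sum_le_sum hvk
      _ ≤ ∑ _k ∈ Finset.Icc 1 N, (N : ℝ) * ε * I := by
          refine Finset.sum_le_sum fun k hk => ?_
          have hkN : (k : ℝ) ≤ (N : ℝ) := by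
            exact_mod_cast (Finset.mem_Icc.mp hk).2
          have : 0 ≤ ε * I := by positivity
          nlinarith
      _ = (N : ℝ) * ((N : ℝ) * ε * I) := by
          rw [Finset.sum_const, Nat.card_Icc, Nat.add_sub_cancel, nsmul_eq_mul]
  have hNpos : (0:ℝ) < (N : ℝ) := by exact_mod_cast hN
  calc ((N : ℝ)⁻¹) ^ 2 * ∑ k ∈ Finset.Icc 1 N, ProbabilityTheory.variance (Z k) P
      ≤ ((N : ℝ)⁻¹) ^ 2 * ((N : ℝ) * ((N : ℝ) * ε * I)) := by
        refine mul_le_mul_of_nonneg_left hsum ?_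
        positivity
    _ = ε * I := by
        field_simp
    _ ≤ 2 * ε * I := by nlinarith

/-- Lemma 2.3: the variance-type estimate for truncated sums. -/
theorem integral_sq_truncated_sum_le
    (Ω : Type*) [MeasurableSpace Ω] (P : Measure Ω) [IsProbabilityMeasure P]
    (X : ℕ → Ω → ℝ) (hmeas : ∀ k, Measurable (X k))
    (hindep : ProbabilityTheory.iIndepFun X P)
    (hunif : ∀ k, Measure.map (X k) P = volume.restrict (Set.Ioo 0 1))
    (f : ℝ → ℝ) (hf_int : IntegrableOn f (Set.Ioo 0 1))
    (hf_nonneg : ∀ x ∈ Set.Ioo (0:ℝ) 1, 0 ≤ f x)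
    (ε : ℝ) (hε : 0 < ε) (N : ℕ) (hN : 0 < N) :
    ∫ ω, ((N : ℝ)⁻¹ * ∑ k ∈ Finset.Icc 1 N,
        (Set.indicator {x : ℝ | f x < (k : ℝ) * ε} f (X k ω)
          - ∫ x in Set.Ioo 0 1 ∩ {x : ℝ | f x < (k : ℝ) * ε}, f x)) ^ 2 ∂P
      ≤ 2 * ε * ∫ x in Set.Ioo (0:ℝ) 1, f x := by
  have hfae : AEStronglyMeasurable f (volume.restrict (Set.Ioo 0 1)) := hf_int.1
  set f' : ℝ → ℝ := fun x => max (hfae.mk f x) 0 with hf'def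
  have hf'meas : Measurable f' :=
    hfae.stronglyMeasurable_mk.measurable.max measurable_const
  have heq : f =ᵐ[volume.restrict (Set.Ioo 0 1)] f' := by
    filter_upwards [hfae.ae_eq_mk, ae_restrict_mem measurableSet_Ioo] with x hx hmem
    simp only [hf'def]
    rw [← hx, max_eq_left (hf_nonneg x hmem)]
  have hf'nonneg : ∀ x, 0 ≤ f' x := fun x => le_max_right _ _
  have hf'int : IntegrableOn f' (Set.Ioo 0 1) := hf_int.congr heq
  have key := aux_variance_bound Ω P X hmeas hindep hunif f' hf'meas hf'int hf'nonneg ε hε N hN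
  -- the centering constants agree
  have hcs : ∀ k : ℕ, (∫ x in Set.Ioo 0 1 ∩ {x : ℝ | f x < (k : ℝ) * ε}, f x)
      = ∫ x in Set.Ioo 0 1 ∩ {x : ℝ | f' x < (k : ℝ) * ε}, f' x := by
    intro k
    have hnull : volume ({x : ℝ | ¬ f x = f' x} ∩ Set.Ioo 0 1) = 0 := by
      have h := heq
      rw [Filter.EventuallyEq, ae_iff, Measure.restrict_apply' measurableSet_Ioo] at h
      exact h
    have hseteq : (Set.Ioo 0 1 ∩ {x : ℝ | f x < (k : ℝ) * ε} : Set ℝ)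
        =ᵐ[volume] (Set.Ioo 0 1 ∩ {x : ℝ | f' x < (k : ℝ) * ε} : Set ℝ) := by
      rw [MeasureTheory.ae_eq_set]
      constructor
      · refine measure_mono_null ?_ hnull
        rintro x ⟨⟨hx1, hx2⟩, hx3⟩
        refine ⟨fun hcontra => hx3 ⟨hx1, ?_⟩, hx1⟩
        rwa [Set.mem_setOf_eq, ← hcontra]
      · refine measure_mono_null ?_ hnull
        rintro x ⟨⟨hx1, hx2⟩, hx3⟩
        refine ⟨fun hcontra => hx3 ⟨hx1, ?_⟩, hx1⟩
        rwa [Set.mem_setOf_eq, hcontra]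
    rw [setIntegral_congr_set hseteq]
    exact integral_congr_ae
      (ae_restrict_of_ae_restrict_of_subset Set.inter_subset_left heq)
  -- the indicator terms agree a.e.
  have hind : ∀ k : ℕ, ∀ᵐ ω ∂P,
      Set.indicator {x : ℝ | f x < (k : ℝ) * ε} f (X k ω)
        = Set.indicator {x : ℝ | f' x < (k : ℝ) * ε} f' (X k ω) := by
    intro k
    have h2 : ∀ᵐ y ∂(volume.restrict (Set.Ioo 0 1)),
        Set.indicator {x : ℝ | f x < (k : ℝ) * ε} f y
          = Set.indicator {x : ℝ | f' x < (k : ℝ) * ε} f' y := by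
      filter_upwards [heq] with y hy
      simp [Set.indicator_apply, Set.mem_setOf_eq, hy]
    rw [← hunif k] at h2
    exact ae_of_ae_map (hmeas k).aemeasurable h2
  have hLHS : ∫ ω, ((N : ℝ)⁻¹ * ∑ k ∈ Finset.Icc 1 N,
        (Set.indicator {x : ℝ | f x < (k : ℝ) * ε} f (X k ω)
          - ∫ x in Set.Ioo 0 1 ∩ {x : ℝ | f x < (k : ℝ) * ε}, f x)) ^ 2 ∂P
      = ∫ ω, ((N : ℝ)⁻¹ * ∑ k ∈ Finset.Icc 1 N,
        (Set.indicator {x : ℝ | f' x < (k : ℝ) * ε} f' (X k ω)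
          - ∫ x in Set.Ioo 0 1 ∩ {x : ℝ | f' x < (k : ℝ) * ε}, f' x)) ^ 2 ∂P := by
    refine integral_congr_ae ?_
    filter_upwards [ae_all_iff.mpr hind] with ω hω
    have hsum : ∑ k ∈ Finset.Icc 1 N,
        (Set.indicator {x : ℝ | f x < (k : ℝ) * ε} f (X k ω)
          - ∫ x in Set.Ioo 0 1 ∩ {x : ℝ | f x < (k : ℝ) * ε}, f x)
        = ∑ k ∈ Finset.Icc 1 N,
        (Set.indicator {x : ℝ | f' x < (k : ℝ) * ε} f' (X k ω)
          - ∫ x in Set.Ioo 0 1 ∩ {x : ℝ | f' x < (k : ℝ) * ε}, f' x) :=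
      Finset.sum_congr rfl fun k _ => by rw [hω k, hcs k]
    rw [hsum]
  have hRHS : ∫ x in Set.Ioo (0:ℝ) 1, f' x = ∫ x in Set.Ioo (0:ℝ) 1, f x :=
    integral_congr_ae heq.symm
  rw [hLHS, ← hRHS]
  exact key
end

section
/- Let f be a Lebesgue integrable non-negative real-valued function on (0,1). For m ∈ ℕ define F_m((x_i)) = limsup_{N→∞} (1/N²) ( Σ_{k=1}^N ( f(x_k)·χ_{{x : f(x) < k/m}}(x_k) − ∫_{{x : f(x) < k/m}} f(x) dx ) )². Then ∫_{(0,1)^∞} F_m dℓ_1^∞ ≤ (2/m) ∫_0^1 f(x) dx. -/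
open MeasureTheory Filter Topology


theorem cesaro_shift {u : ℕ → ℝ} {l : ℝ}
    (h : Tendsto (fun n : ℕ => (∑ i ∈ Finset.range n, u i) / n) atTop (𝓝 l)) :
    Tendsto (fun n : ℕ => (∑ k ∈ Finset.Icc 1 n, u k) / n) atTop (𝓝 l) := by
  have key : ∀ n : ℕ, ∑ k ∈ Finset.Icc 1 n, u k = (∑ i ∈ Finset.range (n+1), u i) - u 0 := by
    intro n
    rw [Finset.sum_range_succ', show Finset.Icc 1 n = Finset.Ico 1 (n+1) by
      rw [Finset.Ico_add_one_right_eq_Icc], Finset.sum_Ico_eq_sum_range]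
    simp [add_comm]
  have h1 : Tendsto (fun n : ℕ => (∑ i ∈ Finset.range (n+1), u i) / ((n:ℝ)+1)) atTop (𝓝 l) := by
    have := h.comp (tendsto_add_atTop_nat 1)
    simpa [Function.comp_def] using this
  have h2 : Tendsto (fun n : ℕ => ((n:ℝ)+1)/n) atTop (𝓝 1) := by
    have : Tendsto (fun n : ℕ => (1:ℝ) + 1/n) atTop (𝓝 (1 + 0)) :=
      tendsto_const_nhds.add tendsto_one_div_atTop_nhds_zero_nat
    rw [add_zero] at this
    refine this.congr' ?_
    filter_upwards [eventually_ge_atTop 1] with n hn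
    have : (n:ℝ) ≠ 0 := Nat.cast_ne_zero.2 (by omega)
    field_simp
  have h3 : Tendsto (fun n : ℕ => u 0 * (1/(n:ℝ))) atTop (𝓝 (u 0 * 0)) :=
    tendsto_const_nhds.mul tendsto_one_div_atTop_nhds_zero_nat
  have := (h1.mul h2).sub h3
  rw [mul_one, mul_zero, sub_zero] at this
  refine this.congr' ?_
  filter_upwards [eventually_ge_atTop 1] with n hn
  have hn' : (n:ℝ) ≠ 0 := Nat.cast_ne_zero.2 (by omega)
  rw [key]
  field_simp


theorem aux_tendsto
    (Ω : Type*) [MeasurableSpace Ω] (P : Measure Ω) [IsProbabilityMeasure P]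
    (X : ℕ → Ω → ℝ) (hmeas : ∀ k, Measurable (X k))
    (hindep : ProbabilityTheory.iIndepFun X P)
    (hunif : ∀ k, Measure.map (X k) P = volume.restrict (Set.Ioo 0 1))
    (g : ℝ → ℝ) (hg : Measurable g) (hg_nonneg : ∀ x, 0 ≤ g x)
    (hg_int : IntegrableOn g (Set.Ioo 0 1))
    (m : ℕ) (hm : 0 < m) :
    ∀ᵐ ω ∂P, Tendsto (fun N : ℕ =>
      (∑ k ∈ Finset.Icc 1 N,
        (Set.indicator {x : ℝ | g x < (k : ℝ) / m} g (X k ω)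
          - ∫ x in Set.Ioo (0:ℝ) 1, Set.indicator {x : ℝ | g x < (k:ℝ)/m} g x)) / N)
      atTop (𝓝 0) := by
  set μ := volume.restrict (Set.Ioo (0:ℝ) 1) with hμ
  have hprob : IsProbabilityMeasure μ := ⟨by simp [μ, Real.volume_Ioo]⟩
  set I := ∫ x, g x ∂μ with hI
  have hgint : Integrable g μ := hg_int
  have hmpos : (0:ℝ) < m := by exact_mod_cast hm
  -- measurability of the level sets
  have hA : ∀ k : ℕ, MeasurableSet {x : ℝ | g x < (k:ℝ)/m} :=
    fun k => measurableSet_lt hg measurable_const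
  -- SLLN for g ∘ X k
  have hZint : Integrable (fun ω => g (X 0 ω)) P := by
    have h1 : Integrable g (Measure.map (X 0) P) := by rw [hunif 0]; exact hgint
    exact (integrable_map_measure hg.aestronglyMeasurable (hmeas 0).aemeasurable).1 h1
  have hident : ∀ i, ProbabilityTheory.IdentDistrib (fun ω => g (X i ω))
      (fun ω => g (X 0 ω)) P P := by
    intro i
    have : ProbabilityTheory.IdentDistrib (X i) (X 0) P P :=
      ⟨(hmeas i).aemeasurable, (hmeas 0).aemeasurable, by rw [hunif i, hunif 0]⟩
    exact this.comp hg
  have hpind : Pairwise (Function.onFun (ProbabilityTheory.IndepFun · · P) fun k ω => g (X k ω)) :=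
    fun i j hij => (hindep.indepFun hij).comp hg hg
  have hm0 : ∫ ω, g (X 0 ω) ∂P = I := by
    rw [hI, ← hunif 0, integral_map (hmeas 0).aemeasurable hg.aestronglyMeasurable]
  have hslln := ProbabilityTheory.strong_law_ae_real (fun k ω => g (X k ω)) hZint hpind hident
  rw [hm0] at hslln
  -- convergence of the truncated means
  have hcg_tendsto : Tendsto (fun k : ℕ =>
      ∫ x in Set.Ioo (0:ℝ) 1, Set.indicator {x : ℝ | g x < (k:ℝ)/m} g x) atTop (𝓝 I) := by
    apply tendsto_integral_of_dominated_convergence g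
      (fun k => (hg.indicator (hA k)).aestronglyMeasurable) hgint
    · intro k
      refine Eventually.of_forall fun x => ?_
      by_cases hx : x ∈ {x : ℝ | g x < (k:ℝ)/m}
      · rw [Set.indicator_of_mem hx, Real.norm_eq_abs, abs_of_nonneg (hg_nonneg x)]
      · rw [Set.indicator_of_notMem hx]; simpa using hg_nonneg x
    · refine Eventually.of_forall fun x => ?_
      obtain ⟨K, hK⟩ := exists_nat_gt (g x * m)
      have hev : ∀ᶠ k : ℕ in atTop, Set.indicator {x : ℝ | g x < (k:ℝ)/m} g x = g x := by
        filter_upwards [eventually_ge_atTop K] with k hk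
        refine Set.indicator_of_mem ?_ g
        show g x < (k:ℝ)/m
        rw [lt_div_iff₀ hmpos]
        exact hK.trans_le (by exact_mod_cast hk)
      exact Tendsto.congr' (hev.mono fun k h => h.symm) tendsto_const_nhds
  have hcesaro : Tendsto (fun N : ℕ =>
      (∑ k ∈ Finset.Icc 1 N, ∫ x in Set.Ioo (0:ℝ) 1,
        Set.indicator {x : ℝ | g x < (k:ℝ)/m} g x) / N) atTop (𝓝 I) := by
    apply cesaro_shift
    have := hcg_tendsto.cesaro
    refine this.congr fun n => ?_
    rw [div_eq_inv_mul]
  -- Borel-Cantelli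
  letI : MeasureSpace Ω := ⟨P⟩
  have hBC : ∀ᵐ ω ∂P, ∀ᶠ k : ℕ in atTop,
      ω ∉ (fun k => X k ⁻¹' {x : ℝ | (k:ℝ)/m ≤ g x}) k := by
    apply MeasureTheory.ae_eventually_notMem
    have hW : Integrable (fun ω => (m:ℝ) * g (X 0 ω) + 1) P :=
      (hZint.const_mul _).add (integrable_const 1)
    have hWnn : 0 ≤ fun ω => (m:ℝ) * g (X 0 ω) + 1 := by
      intro ω
      have := hg_nonneg (X 0 ω)
      positivity
    have hfin := ProbabilityTheory.tsum_prob_mem_Ioi_lt_top hW hWnn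
    have hle : ∀ k : ℕ, P (X k ⁻¹' {x : ℝ | (k:ℝ)/m ≤ g x})
        ≤ P {ω | (m:ℝ) * g (X 0 ω) + 1 ∈ Set.Ioi (k:ℝ)} := by
      intro k
      have hset : MeasurableSet {x : ℝ | (k:ℝ)/m ≤ g x} := measurableSet_le measurable_const hg
      have h1 : P (X k ⁻¹' {x : ℝ | (k:ℝ)/m ≤ g x})
          = P (X 0 ⁻¹' {x : ℝ | (k:ℝ)/m ≤ g x}) := by
        have hid : ProbabilityTheory.IdentDistrib (X k) (X 0) P P :=
          ⟨(hmeas k).aemeasurable, (hmeas 0).aemeasurable, by rw [hunif k, hunif 0]⟩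
        exact hid.measure_mem_eq hset
      rw [h1]
      apply measure_mono
      intro ω hω
      have hω' : (k:ℝ)/m ≤ g (X 0 ω) := hω
      have : (k:ℝ) ≤ (m:ℝ) * g (X 0 ω) := by
        rw [div_le_iff₀ hmpos] at hω'
        linarith [hω']
      simp only [Set.mem_setOf_eq, Set.mem_Ioi]
      linarith
    exact ne_top_of_le_ne_top hfin.ne (ENNReal.tsum_le_tsum hle)
  -- combine
  filter_upwards [hslln, hBC] with ω hω1 hω2
  have ha : Tendsto (fun N : ℕ => (∑ k ∈ Finset.Icc 1 N, g (X k ω)) / N) atTop (𝓝 I) :=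
    cesaro_shift hω1
  obtain ⟨K, hK⟩ := hω2.exists_forall_of_atTop
  set w : ℕ → ℝ := fun k => Set.indicator {x : ℝ | g x < (k:ℝ)/m} g (X k ω) - g (X k ω) with hw
  have hw0 : ∀ k ≥ K, w k = 0 := by
    intro k hk
    have := hK k hk
    have hmem : X k ω ∈ {x : ℝ | g x < (k:ℝ)/m} := by
      simp only [Set.mem_preimage, Set.mem_setOf_eq, not_le] at this ⊢
      exact this
    simp [hw, Set.indicator_of_mem hmem]
  have hwlim : Tendsto (fun N : ℕ => (∑ k ∈ Finset.Icc 1 N, w k) / N) atTop (𝓝 0) := by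
    have hconst := tendsto_const_div_atTop_nhds_zero_nat (∑ k ∈ Finset.Icc 1 K, w k)
    refine hconst.congr' ?_
    filter_upwards [eventually_ge_atTop K] with N hN
    congr 1
    refine Finset.sum_subset (Finset.Icc_subset_Icc_right hN) fun x hx hnx => ?_
    apply hw0
    simp only [Finset.mem_Icc] at hx hnx
    omega
  have hcomb := (ha.add hwlim).sub hcesaro
  rw [add_zero, sub_self] at hcomb
  refine hcomb.congr fun N => ?_
  rw [← add_div, ← sub_div]
  congr 1
  simp only [hw, Finset.sum_sub_distrib]
  ring

/-- Lemma 2.4: the integral of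
`F_m((x_i)) = limsup_N (1/N²)(∑_{k=1}^N (f(x_k)χ_{{f < k/m}}(x_k) − ∫_{{f < k/m}} f))²`
over the infinite power of Lebesgue measure on `(0,1)` is at most `(2/m)∫₀¹ f`. -/
theorem integral_limsup_le
    (Ω : Type*) [MeasurableSpace Ω] (P : Measure Ω) [IsProbabilityMeasure P]
    (X : ℕ → Ω → ℝ) (hmeas : ∀ k, Measurable (X k))
    (hindep : ProbabilityTheory.iIndepFun X P)
    (hunif : ∀ k, Measure.map (X k) P = volume.restrict (Set.Ioo 0 1))
    (f : ℝ → ℝ) (hf_int : IntegrableOn f (Set.Ioo 0 1))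
    (hf_nonneg : ∀ x ∈ Set.Ioo (0:ℝ) 1, 0 ≤ f x)
    (m : ℕ) (hm : 0 < m) :
    ∫ ω, Filter.limsup (fun N : ℕ => ((N : ℝ) ^ 2)⁻¹ *
        (∑ k ∈ Finset.Icc 1 N,
          (Set.indicator {x : ℝ | f x < (k : ℝ) / m} f (X k ω)
            - ∫ x in Set.Ioo 0 1 ∩ {x : ℝ | f x < (k : ℝ) / m}, f x)) ^ 2) atTop ∂P
      ≤ (2 / m) * ∫ x in Set.Ioo (0:ℝ) 1, f x := by
  have hRHS : 0 ≤ (2 / (m:ℝ)) * ∫ x in Set.Ioo (0:ℝ) 1, f x := by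
    apply mul_nonneg (by positivity)
    exact setIntegral_nonneg measurableSet_Ioo hf_nonneg
  -- construct a measurable everywhere-nonnegative representative g of f
  have hsm : AEStronglyMeasurable f (volume.restrict (Set.Ioo (0:ℝ) 1)) := hf_int.1
  set g : ℝ → ℝ := fun x =>
    if x ∈ Set.Ioo (0:ℝ) 1 then max (hsm.mk f x) 0 else 0 with hgdef
  have hg : Measurable g :=
    Measurable.ite measurableSet_Ioo
      (hsm.stronglyMeasurable_mk.measurable.max measurable_const) measurable_const
  have hg_nonneg : ∀ x, 0 ≤ g x := by
    intro x
    rw [hgdef]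
    dsimp only
    split <;> simp [le_max_right]
  have hfg : f =ᵐ[volume.restrict (Set.Ioo (0:ℝ) 1)] g := by
    filter_upwards [hsm.ae_eq_mk, ae_restrict_mem measurableSet_Ioo] with x h1 h2
    rw [hgdef]
    simp only [h2, if_true, ← h1]
    exact (max_eq_left (hf_nonneg x h2)).symm
  have hg_int : IntegrableOn g (Set.Ioo (0:ℝ) 1) := hf_int.congr_fun_ae hfg
  -- constants agree
  have hconst : ∀ k : ℕ, (∫ x in Set.Ioo (0:ℝ) 1 ∩ {x : ℝ | f x < (k:ℝ)/m}, f x)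
      = ∫ x in Set.Ioo (0:ℝ) 1, Set.indicator {x : ℝ | g x < (k:ℝ)/m} g x := by
    intro k
    have hA : MeasurableSet {x : ℝ | g x < (k:ℝ)/m} := measurableSet_lt hg measurable_const
    have hsets : {x : ℝ | f x < (k:ℝ)/m}
        =ᵐ[volume.restrict (Set.Ioo (0:ℝ) 1)] {x : ℝ | g x < (k:ℝ)/m} := by
      rw [Filter.eventuallyEq_set]
      filter_upwards [hfg] with x hx
      simp [hx]
    calc (∫ x in Set.Ioo (0:ℝ) 1 ∩ {x : ℝ | f x < (k:ℝ)/m}, f x)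
        = ∫ x, f x ∂((volume.restrict (Set.Ioo (0:ℝ) 1)).restrict {x : ℝ | f x < (k:ℝ)/m}) := by
          rw [Measure.restrict_restrict' measurableSet_Ioo, Set.inter_comm]
      _ = ∫ x, f x ∂((volume.restrict (Set.Ioo (0:ℝ) 1)).restrict {x : ℝ | g x < (k:ℝ)/m}) := by
          rw [Measure.restrict_congr_set hsets]
      _ = ∫ x, g x ∂((volume.restrict (Set.Ioo (0:ℝ) 1)).restrict {x : ℝ | g x < (k:ℝ)/m}) :=
          integral_congr_ae (ae_restrict_of_ae hfg)
      _ = ∫ x in Set.Ioo (0:ℝ) 1, Set.indicator {x : ℝ | g x < (k:ℝ)/m} g x := by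
          rw [integral_indicator hA]
  -- indicators agree after composition with X k
  have hind : ∀ k : ℕ, (fun ω => Set.indicator {x : ℝ | f x < (k:ℝ)/m} f (X k ω))
      =ᵐ[P] (fun ω => Set.indicator {x : ℝ | g x < (k:ℝ)/m} g (X k ω)) := by
    intro k
    have h1 : Set.indicator {x : ℝ | f x < (k:ℝ)/m} f
        =ᵐ[Measure.map (X k) P] Set.indicator {x : ℝ | g x < (k:ℝ)/m} g := by
      rw [hunif k]
      filter_upwards [hfg] with x hx
      simp only [Set.indicator, Set.mem_setOf_eq, hx]
    exact MeasureTheory.ae_eq_comp (hmeas k).aemeasurable h1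
  have hall : ∀ᵐ ω ∂P, ∀ k : ℕ, Set.indicator {x : ℝ | f x < (k:ℝ)/m} f (X k ω)
      = Set.indicator {x : ℝ | g x < (k:ℝ)/m} g (X k ω) := ae_all_iff.2 hind
  have haux := aux_tendsto Ω P X hmeas hindep hunif g hg hg_nonneg hg_int m hm
  -- the integrand vanishes a.e.
  have hzero : (fun ω => Filter.limsup (fun N : ℕ => ((N : ℝ) ^ 2)⁻¹ *
      (∑ k ∈ Finset.Icc 1 N,
        (Set.indicator {x : ℝ | f x < (k : ℝ) / m} f (X k ω)
          - ∫ x in Set.Ioo 0 1 ∩ {x : ℝ | f x < (k : ℝ) / m}, f x)) ^ 2) atTop)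
      =ᵐ[P] (fun _ => (0:ℝ)) := by
    filter_upwards [haux, hall] with ω hω1 hω2
    have htend : Tendsto (fun N : ℕ => ((N : ℝ) ^ 2)⁻¹ *
        (∑ k ∈ Finset.Icc 1 N,
          (Set.indicator {x : ℝ | f x < (k : ℝ) / m} f (X k ω)
            - ∫ x in Set.Ioo 0 1 ∩ {x : ℝ | f x < (k : ℝ) / m}, f x)) ^ 2) atTop (𝓝 0) := by
      have h2 := (hω1.pow 2)
      rw [show (0:ℝ)^2 = 0 by norm_num] at h2
      refine h2.congr fun N => ?_
      rw [div_pow, div_eq_mul_inv, mul_comm]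
      congr 2
      refine Finset.sum_congr rfl fun k _ => ?_
      rw [hω2 k, hconst k]
    exact htend.limsup_eq
  rw [integral_congr_ae hzero, integral_zero]
  exact hRHS
end

section
/- Let f be a Lebesgue integrable non-negative real-valued function on (0,1). With F_s defined by F_s((x_i)) = limsup_{N→∞} (1/N²) ( Σ_{k=1}^N ( f(x_k)·χ_{{x : f(x) < k/s}}(x_k) − ∫_{{x : f(x) < k/s}} f(x) dx ) )², the set of sequences (x_k) ∈ (0,1)^∞ for which lim_{s→∞} F_s((x_i)) = 0 has ℓ_1^∞-measure one. -/
open MeasureTheory Filter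

open scoped Topology ENNReal

private lemma sum_range_succ_eq_icc (u : ℕ → ℝ) (N : ℕ) :
    ∑ i ∈ Finset.range (N + 1), u i = u 0 + ∑ k ∈ Finset.Icc 1 N, u k := by
  induction N with
  | zero => simp
  | succ n ih =>
      rw [Finset.sum_range_succ, ih, Finset.sum_Icc_succ_top (by omega : 1 ≤ n + 1)]
      ring

private lemma tendsto_inv_mul_sum_Icc (u : ℕ → ℝ) (l : ℝ)
    (h : Tendsto (fun n : ℕ => (n : ℝ)⁻¹ * ∑ i ∈ Finset.range n, u i) atTop (𝓝 l)) :
    Tendsto (fun N : ℕ => (N : ℝ)⁻¹ * ∑ k ∈ Finset.Icc 1 N, u k) atTop (𝓝 l) := by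
  have h1 : Tendsto (fun N : ℕ => ((N + 1 : ℕ) : ℝ)⁻¹ * ∑ i ∈ Finset.range (N + 1), u i)
      atTop (𝓝 l) := h.comp (tendsto_add_atTop_nat 1)
  have h2 : Tendsto (fun N : ℕ => (1 + (N : ℝ)⁻¹) *
      (((N + 1 : ℕ) : ℝ)⁻¹ * ∑ i ∈ Finset.range (N + 1), u i) - u 0 * (N : ℝ)⁻¹) atTop
      (𝓝 ((1 + 0) * l - u 0 * 0)) :=
    ((tendsto_const_nhds.add tendsto_inv_atTop_nhds_zero_nat).mul h1).sub
      (tendsto_const_nhds.mul tendsto_inv_atTop_nhds_zero_nat)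
  simp only [add_zero, one_mul, mul_zero, sub_zero] at h2
  apply h2.congr'
  filter_upwards [eventually_ge_atTop 1] with N hN
  have hN0 : (N : ℝ) ≠ 0 := Nat.cast_ne_zero.mpr (by omega)
  have hN1 : ((N : ℝ) + 1) ≠ 0 := by positivity
  rw [sum_range_succ_eq_icc]
  push_cast
  field_simp
  ring

private lemma aux_g
    (Ω : Type*) [MeasurableSpace Ω] (P : Measure Ω) [IsProbabilityMeasure P]
    (X : ℕ → Ω → ℝ) (hmeas : ∀ k, Measurable (X k))
    (hindep : ProbabilityTheory.iIndepFun X P)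
    (hunif : ∀ k, Measure.map (X k) P = volume.restrict (Set.Ioo 0 1))
    (g : ℝ → ℝ) (hg_meas : Measurable g) (hg_nonneg : ∀ x, 0 ≤ g x)
    (hg_int : Integrable g (volume.restrict (Set.Ioo 0 1)))
    (s : ℕ) (hs : 1 ≤ s) :
    ∀ᵐ ω ∂P, Tendsto (fun N : ℕ => (N : ℝ)⁻¹ *
        ∑ k ∈ Finset.Icc 1 N,
          (Set.indicator {x : ℝ | g x < (k : ℝ) / s} g (X k ω)
            - ∫ x in Set.Ioo 0 1 ∩ {x : ℝ | g x < (k : ℝ) / s}, g x)) atTop (𝓝 0) := by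
  have hs_pos : (0 : ℝ) < (s : ℝ) := by
    have : (1:ℝ) ≤ (s:ℝ) := by exact_mod_cast hs
    linarith
  set μ0 : Measure ℝ := volume.restrict (Set.Ioo 0 1) with hμ0
  have hprob : IsProbabilityMeasure μ0 := by
    constructor
    rw [hμ0, Measure.restrict_apply_univ, Real.volume_Ioo]
    norm_num
  set Alow : ℕ → Set ℝ := fun k => {x : ℝ | g x < (k : ℝ) / s} with hAlow_def
  set Ahigh : ℕ → Set ℝ := fun k => {x : ℝ | (k : ℝ) / s ≤ g x} with hAhigh_def
  have hAlow : ∀ k, MeasurableSet (Alow k) := fun k =>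
    measurableSet_lt hg_meas measurable_const
  have hAhigh : ∀ k, MeasurableSet (Ahigh k) := fun k =>
    measurableSet_le measurable_const hg_meas
  set μ : ℝ := ∫ x, g x ∂μ0 with hμ_def
  set m : ℕ → ℝ := fun k => ∫ x in Set.Ioo 0 1 ∩ Alow k, g x with hm_def
  set d : ℕ → ℝ := fun k => ∫ x, Set.indicator (Ahigh k) g x ∂μ0 with hd_def
  have hIlow : ∀ k, Integrable (Set.indicator (Alow k) g) μ0 := fun k =>
    hg_int.indicator (hAlow k)
  have hIhigh : ∀ k, Integrable (Set.indicator (Ahigh k) g) μ0 := fun k =>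
    hg_int.indicator (hAhigh k)
  have hsplit : ∀ k x, Set.indicator (Alow k) g x + Set.indicator (Ahigh k) g x = g x := by
    intro k x
    by_cases h : g x < (k : ℝ) / s
    · rw [Set.indicator_of_mem (by exact h) g, Set.indicator_of_notMem (by
        simp only [hAhigh_def, Set.mem_setOf_eq, not_le]; exact h)]
      ring
    · rw [Set.indicator_of_notMem (by exact h), Set.indicator_of_mem (by
        simp only [hAhigh_def, Set.mem_setOf_eq]; exact not_lt.mp h)]
      ring
  have hm : ∀ k, m k = ∫ x, Set.indicator (Alow k) g x ∂μ0 := by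
    intro k
    rw [hm_def]
    have hres : volume.restrict (Set.Ioo 0 1 ∩ Alow k) = μ0.restrict (Alow k) := by
      rw [hμ0, Measure.restrict_restrict (hAlow k), Set.inter_comm]
    simp only []
    rw [integral_indicator (hAlow k), ← hres]
  have hmd : ∀ k, m k + d k = μ := by
    intro k
    rw [hm k, hd_def, hμ_def, ← integral_add (hIlow k) (hIhigh k)]
    apply integral_congr_ae
    filter_upwards with x
    exact hsplit k x
  -- Strong law part
  have hZint : ∀ k, Integrable (g ∘ X k) P := by
    intro k
    have h1 : Integrable g (Measure.map (X k) P) := by rw [hunif k]; exact hg_int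
    exact (integrable_map_measure hg_meas.aestronglyMeasurable (hmeas k).aemeasurable).mp h1
  have hident : ∀ k, ProbabilityTheory.IdentDistrib (g ∘ X k) (g ∘ X 0) P P := fun k =>
    ⟨(hg_meas.comp (hmeas k)).aemeasurable, (hg_meas.comp (hmeas 0)).aemeasurable, by
      rw [← Measure.map_map hg_meas (hmeas k), ← Measure.map_map hg_meas (hmeas 0),
        hunif, hunif]⟩
  have hpair : Pairwise (Function.onFun (ProbabilityTheory.IndepFun · · P) (fun k => g ∘ X k)) :=
    fun i j hij => (hindep.comp (fun _ => g) (fun _ => hg_meas)).indepFun hij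
  have hslln := ProbabilityTheory.strong_law_ae_real (fun k => g ∘ X k) (hZint 0) hpair hident
  simp only [Function.comp_apply] at hslln
  have hmean : (∫ ω, g (X 0 ω) ∂P) = μ := by
    rw [← integral_map (hmeas 0).aemeasurable hg_meas.aestronglyMeasurable, hunif 0]
  rw [hmean] at hslln
  -- Borel-Cantelli part
  have hPs : ∀ k, P (X k ⁻¹' Ahigh k) = μ0 (Ahigh k) := fun k => by
    rw [← Measure.map_apply (hmeas k) (hAhigh k), hunif k]
  have hsum : (∑' k, P (X k ⁻¹' Ahigh k)) ≠ ∞ := by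
    simp only [hPs]
    have h1 : (∑' k, μ0 (Ahigh k)) = ∫⁻ x, ∑' k, Set.indicator (Ahigh k) (1 : ℝ → ℝ≥0∞) x ∂μ0 := by
      rw [lintegral_tsum (fun k => (measurable_one.indicator (hAhigh k)).aemeasurable)]
      congr 1
      funext k
      rw [lintegral_indicator_one (hAhigh k)]
    have hpt : ∀ x : ℝ, (∑' k, Set.indicator (Ahigh k) (1 : ℝ → ℝ≥0∞) x)
        ≤ ENNReal.ofReal ((s : ℝ) * g x) + 1 := by
      intro x
      have hsupp : ∀ k ∉ Finset.range (⌊(s : ℝ) * g x⌋₊ + 1),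
          Set.indicator (Ahigh k) (1 : ℝ → ℝ≥0∞) x = 0 := by
        intro k hk
        apply Set.indicator_of_notMem
        intro hx
        apply hk
        rw [Finset.mem_range, Nat.lt_succ_iff]
        apply Nat.le_floor
        have : (k : ℝ) / s ≤ g x := hx
        rw [div_le_iff₀ hs_pos] at this
        linarith
      rw [tsum_eq_sum hsupp]
      calc ∑ k ∈ Finset.range (⌊(s : ℝ) * g x⌋₊ + 1),
            Set.indicator (Ahigh k) (1 : ℝ → ℝ≥0∞) x
          ≤ ∑ _k ∈ Finset.range (⌊(s : ℝ) * g x⌋₊ + 1), 1 :=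
            Finset.sum_le_sum (fun k _ => Set.indicator_le_self _ _ x)
        _ = (⌊(s : ℝ) * g x⌋₊ + 1 : ℕ) := by simp
        _ ≤ ENNReal.ofReal ((s : ℝ) * g x) + 1 := by
            push_cast
            gcongr
            rw [← ENNReal.ofReal_natCast]
            exact ENNReal.ofReal_le_ofReal
              (Nat.floor_le (mul_nonneg hs_pos.le (hg_nonneg x)))
    have h2 : (∫⁻ x, (ENNReal.ofReal ((s : ℝ) * g x) + 1) ∂μ0) < ∞ := by
      rw [lintegral_add_right _ measurable_const]
      have hInt : Integrable (fun x => (s : ℝ) * g x) μ0 := hg_int.const_mul _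
      have hnn : 0 ≤ᵐ[μ0] fun x => (s : ℝ) * g x :=
        Filter.Eventually.of_forall (fun x => mul_nonneg hs_pos.le (hg_nonneg x))
      have := (lintegral_ofReal_ne_top_iff_integrable hInt.aestronglyMeasurable hnn).mpr hInt
      have h3 : (∫⁻ _, (1:ℝ≥0∞) ∂μ0) < ∞ := by
        rw [lintegral_one]
        exact measure_lt_top μ0 _
      exact ENNReal.add_lt_top.mpr ⟨lt_top_iff_ne_top.mpr this, h3⟩
    rw [h1]
    exact ne_top_of_le_ne_top h2.ne (lintegral_mono hpt)
  have hBC : ∀ᵐ ω ∂P, {k : ℕ | X k ω ∈ Ahigh k}.Finite :=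
    ae_finite_setOf_mem hsum
  -- Cesaro part
  have hd0 : Tendsto d atTop (𝓝 0) := by
    have h0 : (0 : ℝ) = ∫ x, (0:ℝ) ∂μ0 := by simp
    rw [hd_def, h0]
    apply tendsto_integral_of_dominated_convergence g
      (fun k => ((hg_meas.indicator (hAhigh k)).aestronglyMeasurable)) hg_int
    · intro k
      filter_upwards with x
      rw [Real.norm_eq_abs, abs_of_nonneg (Set.indicator_nonneg (fun y _ => hg_nonneg y) x)]
      exact Set.indicator_le_self' (fun y _ => hg_nonneg y) x
    · filter_upwards with x
      have hev : ∀ᶠ k : ℕ in atTop, Set.indicator (Ahigh k) g x = 0 := by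
        have h4 : ∀ᶠ k : ℕ in atTop, (s : ℝ) * g x < (k : ℕ) := by
          exact_mod_cast tendsto_natCast_atTop_atTop.eventually_gt_atTop ((s : ℝ) * g x)
        filter_upwards [h4] with k hk
        apply Set.indicator_of_notMem
        intro hx
        have : (k : ℝ) / s ≤ g x := hx
        rw [div_le_iff₀ hs_pos] at this
        linarith
      exact tendsto_const_nhds.congr' (by filter_upwards [hev] with k hk; exact hk.symm)
  have hT3 : Tendsto (fun N : ℕ => (N : ℝ)⁻¹ * ∑ k ∈ Finset.Icc 1 N, d k) atTop (𝓝 0) :=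
    tendsto_inv_mul_sum_Icc d 0 hd0.cesaro
  -- Combine
  filter_upwards [hslln, hBC] with ω hω1 hω2
  -- T1
  have hT1 : Tendsto (fun N : ℕ => (N : ℝ)⁻¹ *
      ∑ k ∈ Finset.Icc 1 N, (g (X k ω) - μ)) atTop (𝓝 0) := by
    have hA : Tendsto (fun N : ℕ => (N : ℝ)⁻¹ *
        ∑ k ∈ Finset.Icc 1 N, g (X k ω)) atTop (𝓝 μ) := by
      apply tendsto_inv_mul_sum_Icc (fun k => g (X k ω)) μ
      apply hω1.congr
      intro n
      rw [div_eq_inv_mul]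
    have hC : Tendsto (fun N : ℕ => (N : ℝ)⁻¹ *
        ∑ _k ∈ Finset.Icc 1 N, μ) atTop (𝓝 μ) := by
      apply tendsto_const_nhds.congr'
      filter_upwards [eventually_ge_atTop 1] with N hN
      have hN0 : (N : ℝ) ≠ 0 := Nat.cast_ne_zero.mpr (by omega)
      rw [Finset.sum_const, Nat.card_Icc, Nat.add_sub_cancel, nsmul_eq_mul, ← mul_assoc,
        inv_mul_cancel₀ hN0, one_mul]
    have := hA.sub hC
    rw [sub_self] at this
    apply this.congr
    intro N
    rw [Finset.sum_sub_distrib, mul_sub]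
  -- T2
  have hT2 : Tendsto (fun N : ℕ => (N : ℝ)⁻¹ *
      ∑ k ∈ Finset.Icc 1 N, Set.indicator (Ahigh k) g (X k ω)) atTop (𝓝 0) := by
    obtain ⟨K, hK⟩ := hω2.bddAbove
    have hzero : ∀ k, K < k → Set.indicator (Ahigh k) g (X k ω) = 0 := by
      intro k hk
      apply Set.indicator_of_notMem
      intro hx
      exact absurd (hK hx) (by omega)
    have hconst2 : ∀ N, K ≤ N → ∑ k ∈ Finset.Icc 1 N, Set.indicator (Ahigh k) g (X k ω)
        = ∑ k ∈ Finset.Icc 1 K, Set.indicator (Ahigh k) g (X k ω) := by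
      intro N hN
      refine (Finset.sum_subset (Finset.Icc_subset_Icc_right hN) ?_).symm
      intro k hk1 hk2
      simp only [Finset.mem_Icc] at hk1 hk2
      exact hzero k (by omega)
    have hlim : Tendsto (fun N : ℕ => (N : ℝ)⁻¹ *
        ∑ k ∈ Finset.Icc 1 K, Set.indicator (Ahigh k) g (X k ω)) atTop (𝓝 0) := by
      have := tendsto_inv_atTop_nhds_zero_nat.mul_const
        (∑ k ∈ Finset.Icc 1 K, Set.indicator (Ahigh k) g (X k ω))
      simpa using this
    apply hlim.congr'
    filter_upwards [eventually_ge_atTop K] with N hN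
    rw [hconst2 N hN]
  have hfinal := (hT1.sub hT2).add hT3
  rw [sub_zero, add_zero] at hfinal
  apply hfinal.congr
  intro N
  have hterm : ∀ k ∈ Finset.Icc 1 N,
      (g (X k ω) - μ) - Set.indicator (Ahigh k) g (X k ω) + d k
      = Set.indicator (Alow k) g (X k ω) - m k := by
    intro k _
    have h1 := hsplit k (X k ω)
    have h2 := hmd k
    linarith
  rw [← mul_sub, ← mul_add, ← Finset.sum_sub_distrib, ← Finset.sum_add_distrib,
    Finset.sum_congr rfl hterm]


/-- Lemma 2.5: for almost every sequence `(x_k)` in `(0,1)^∞`,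
`F_s((x_i)) = limsup_N (1/N²)(∑_{k=1}^N (f(x_k)χ_{{f < k/s}}(x_k) − ∫_{{f < k/s}} f))²`
tends to `0` as `s → ∞`. -/
theorem ae_tendsto_limsup_zero
    (Ω : Type*) [MeasurableSpace Ω] (P : Measure Ω) [IsProbabilityMeasure P]
    (X : ℕ → Ω → ℝ) (hmeas : ∀ k, Measurable (X k))
    (hindep : ProbabilityTheory.iIndepFun X P)
    (hunif : ∀ k, Measure.map (X k) P = volume.restrict (Set.Ioo 0 1))
    (f : ℝ → ℝ) (hf_int : IntegrableOn f (Set.Ioo 0 1))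
    (hf_nonneg : ∀ x ∈ Set.Ioo (0:ℝ) 1, 0 ≤ f x) :
    ∀ᵐ ω ∂P, Tendsto (fun s : ℕ =>
        Filter.limsup (fun N : ℕ => ((N : ℝ) ^ 2)⁻¹ *
          (∑ k ∈ Finset.Icc 1 N,
            (Set.indicator {x : ℝ | f x < (k : ℝ) / s} f (X k ω)
              - ∫ x in Set.Ioo 0 1 ∩ {x : ℝ | f x < (k : ℝ) / s}, f x)) ^ 2) atTop)
      atTop (nhds 0) := by
  set μ0 : Measure ℝ := volume.restrict (Set.Ioo 0 1) with hμ0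
  obtain ⟨g0, hg0_meas, hfg0⟩ : ∃ g0 : ℝ → ℝ, Measurable g0 ∧ f =ᵐ[μ0] g0 := by
    have h := hf_int.aestronglyMeasurable
    exact ⟨h.mk f, h.stronglyMeasurable_mk.measurable, h.ae_eq_mk⟩
  set g : ℝ → ℝ := fun x => max (g0 x) 0 with hg_def
  have hg_meas : Measurable g := hg0_meas.max measurable_const
  have hg_nonneg : ∀ x, 0 ≤ g x := fun x => le_max_right _ _
  have hfg : f =ᵐ[μ0] g := by
    have h1 : ∀ᵐ x ∂μ0, x ∈ Set.Ioo (0:ℝ) 1 := ae_restrict_mem measurableSet_Ioo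
    filter_upwards [hfg0, h1] with x hx1 hx2
    rw [hg_def]
    simp only []
    rw [← hx1]
    exact (max_eq_left (hf_nonneg x hx2)).symm
  have hg_int : Integrable g μ0 := hf_int.congr hfg
  have hnull : μ0 {x | ¬ f x = g x} = 0 := ae_iff.mp hfg
  obtain ⟨M, hMsub, hMmeas, hM0⟩ := exists_measurable_superset_of_null hnull
  have hvol : volume (M ∩ Set.Ioo 0 1) = 0 := by
    rw [← Measure.restrict_apply hMmeas]
    exact hM0
  have hInt_eq : ∀ c : ℝ, (∫ x in Set.Ioo 0 1 ∩ {x | f x < c}, f x)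
      = ∫ x in Set.Ioo 0 1 ∩ {x | g x < c}, g x := by
    intro c
    have hle : volume.restrict (Set.Ioo 0 1 ∩ {x | f x < c}) ≤ μ0 :=
      Measure.restrict_mono Set.inter_subset_left le_rfl
    have step1 : (∫ x in Set.Ioo 0 1 ∩ {x | f x < c}, f x)
        = ∫ x in Set.Ioo 0 1 ∩ {x | f x < c}, g x :=
      integral_congr_ae (hfg.filter_mono (ae_mono hle))
    have hsub1 : (Set.Ioo 0 1 ∩ {x | f x < c} : Set ℝ) \ (Set.Ioo 0 1 ∩ {x | g x < c})
        ⊆ M ∩ Set.Ioo 0 1 := by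
      rintro x ⟨⟨hIoo, hfc⟩, hnot⟩
      have hgc : ¬ g x < c := fun h => hnot ⟨hIoo, h⟩
      have : ¬ f x = g x := fun h => hgc (h ▸ hfc)
      exact ⟨hMsub this, hIoo⟩
    have hsub2 : (Set.Ioo 0 1 ∩ {x | g x < c} : Set ℝ) \ (Set.Ioo 0 1 ∩ {x | f x < c})
        ⊆ M ∩ Set.Ioo 0 1 := by
      rintro x ⟨⟨hIoo, hgc⟩, hnot⟩
      have hfc : ¬ f x < c := fun h => hnot ⟨hIoo, h⟩
      have : ¬ f x = g x := fun h => hfc (h ▸ hgc)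
      exact ⟨hMsub this, hIoo⟩
    have hsets : (Set.Ioo 0 1 ∩ {x | f x < c} : Set ℝ) =ᵐ[volume]
        (Set.Ioo 0 1 ∩ {x | g x < c} : Set ℝ) :=
      MeasureTheory.ae_eq_set.mpr
        ⟨measure_mono_null hsub1 hvol, measure_mono_null hsub2 hvol⟩
    rw [step1, Measure.restrict_congr_set hsets]
  have hM_ae : ∀ᵐ ω ∂P, ∀ k, X k ω ∉ M := by
    rw [ae_all_iff]
    intro k
    have h1 : P (X k ⁻¹' M) = 0 := by
      rw [← Measure.map_apply (hmeas k) hMmeas, hunif k]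
      exact hM0
    exact measure_eq_zero_iff_ae_notMem.mp h1
  have haux : ∀ᵐ ω ∂P, ∀ s : ℕ, 1 ≤ s → Tendsto (fun N : ℕ => (N : ℝ)⁻¹ *
      ∑ k ∈ Finset.Icc 1 N, (Set.indicator {x : ℝ | g x < (k : ℝ) / s} g (X k ω)
        - ∫ x in Set.Ioo 0 1 ∩ {x : ℝ | g x < (k : ℝ) / s}, g x)) atTop (𝓝 0) := by
    rw [ae_all_iff]
    intro s
    by_cases hs : 1 ≤ s
    · filter_upwards [aux_g Ω P X hmeas hindep hunif g hg_meas hg_nonneg hg_int s hs]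
        with ω hω _
      exact hω
    · filter_upwards with ω hs'
      exact absurd hs' hs
  filter_upwards [hM_ae, haux] with ω hωM hωaux
  apply tendsto_const_nhds.congr'
  filter_upwards [eventually_ge_atTop 1] with s hs1
  have hfeq : ∀ k : ℕ, Set.indicator {x : ℝ | f x < (k:ℝ)/s} f (X k ω)
      = Set.indicator {x : ℝ | g x < (k:ℝ)/s} g (X k ω) := by
    intro k
    have hfg_x : f (X k ω) = g (X k ω) := by
      by_contra h
      exact hωM k (hMsub h)
    by_cases h : f (X k ω) < (k:ℝ)/s
    · rw [Set.indicator_of_mem (by exact h), Set.indicator_of_mem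
        (by show g (X k ω) < (k:ℝ)/s; rw [← hfg_x]; exact h), hfg_x]
    · rw [Set.indicator_of_notMem (by exact h), Set.indicator_of_notMem
        (by show ¬ g (X k ω) < (k:ℝ)/s; rw [← hfg_x]; exact h)]
  have ht : Tendsto (fun N : ℕ => ((N : ℝ)⁻¹ * (∑ k ∈ Finset.Icc 1 N,
      (Set.indicator {x : ℝ | g x < (k:ℝ)/s} g (X k ω)
        - ∫ x in Set.Ioo 0 1 ∩ {x | g x < (k:ℝ)/s}, g x))) ^ 2) atTop (𝓝 0) := by
    have h2 := (hωaux s hs1).pow 2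
    rw [show ((0:ℝ))^2 = 0 by norm_num] at h2
    exact h2
  have hseq : (fun N : ℕ => ((N : ℝ) ^ 2)⁻¹ * (∑ k ∈ Finset.Icc 1 N,
      (Set.indicator {x : ℝ | f x < (k:ℝ)/s} f (X k ω)
        - ∫ x in Set.Ioo 0 1 ∩ {x | f x < (k:ℝ)/s}, f x)) ^ 2)
      = (fun N : ℕ => ((N : ℝ)⁻¹ * (∑ k ∈ Finset.Icc 1 N,
      (Set.indicator {x : ℝ | g x < (k:ℝ)/s} g (X k ω)
        - ∫ x in Set.Ioo 0 1 ∩ {x | g x < (k:ℝ)/s}, g x))) ^ 2) := by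
    funext N
    rw [mul_pow, ← inv_pow]
    congr 2
    apply Finset.sum_congr rfl
    intro k _
    rw [hfeq k, hInt_eq ((k:ℝ)/s)]
  show (0 : ℝ) = _
  rw [hseq]
  exact ht.limsup_eq.symm
end

section
/- Let f : (0,1) → ℝ be Lebesgue integrable. Then the set S_f of sequences (x_k) ∈ (0,1)^∞ on which the following four conditions hold simultaneously — (1) lim_n f(x_n)/n = 0; (2) lim_N (1/N) Σ_{k=1}^N f(x_k) exists; (3) lim_N (1/N) Σ_{k=1}^N f(x_k) = ∫_{(0,1)} f dx; (4) (x_k) is uniformly distributed in (0,1) — has ℓ_1^∞-measure one. -/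
open MeasureTheory Filter

/-- `(s_n)` is uniformly distributed in `(0,1)`. -/
def IsUniformlyDistributed (x : ℕ → ℝ) : Prop :=
  ∀ c d : ℝ, 0 ≤ c → c ≤ d → d ≤ 1 →
    Tendsto (fun n : ℕ =>
        (((Finset.range n).filter fun k => x k ∈ Set.Icc c d).card : ℝ) / n)
      atTop (nhds (d - c))

open ProbabilityTheory


lemma slln_aux {Ω : Type*} [MeasurableSpace Ω] (P : Measure Ω) [IsProbabilityMeasure P]
    (X : ℕ → Ω → ℝ) (hmeas : ∀ k, Measurable (X k))
    (hindep : ProbabilityTheory.iIndepFun X P)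
    (hunif : ∀ k, Measure.map (X k) P = volume.restrict (Set.Ioo 0 1))
    (g : ℝ → ℝ) (hg : Measurable g) (hgi : IntegrableOn g (Set.Ioo 0 1))
    (σ : ℕ → ℕ) (hσ : Function.Injective σ) :
    ∀ᵐ ω ∂P, Tendsto (fun n : ℕ => (∑ i ∈ Finset.range n, g (X (σ i) ω)) / n) atTop
      (nhds (∫ x in Set.Ioo (0:ℝ) 1, g x)) := by
  set Y : ℕ → Ω → ℝ := fun i ω => g (X (σ i) ω) with hY_def
  have hY : ∀ i, Measurable (Y i) := fun i => hg.comp (hmeas (σ i))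
  have hmap : ∀ i, Measure.map (Y i) P = (volume.restrict (Set.Ioo 0 1)).map g := fun i => by
    rw [← hunif (σ i), Measure.map_map hg (hmeas (σ i))]; rfl
  have hident : ∀ i, IdentDistrib (Y i) (Y 0) P P := fun i =>
    ⟨(hY i).aemeasurable, (hY 0).aemeasurable, by rw [hmap, hmap]⟩
  have hintg : Integrable g (Measure.map (X (σ 0)) P) := by rw [hunif]; exact hgi
  have hint : Integrable (Y 0) P :=
    (integrable_map_measure hg.aestronglyMeasurable (hmeas (σ 0)).aemeasurable).mp hintg
  have hindepY : Pairwise (Function.onFun (IndepFun · · P) Y) := fun i j hij =>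
    (hindep.indepFun (hσ.ne hij)).comp hg hg
  have := strong_law_ae_real Y hint hindepY hident
  have hexp : (∫ ω, Y 0 ω ∂P) = ∫ x in Set.Ioo (0:ℝ) 1, g x := by
    rw [← hunif (σ 0), integral_map (hmeas (σ 0)).aemeasurable hg.aestronglyMeasurable]
  rwa [hexp] at this


lemma count_eq_sum (x : ℕ → ℝ) (c d : ℝ) (n : ℕ) :
    (((Finset.range n).filter fun k => x k ∈ Set.Icc c d).card : ℝ)
      = ∑ i ∈ Finset.range n, Set.indicator (Set.Icc c d) (1 : ℝ → ℝ) (x i) := by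
  rw [Finset.card_filter]
  push_cast
  refine Finset.sum_congr rfl fun i _ => ?_
  by_cases h : x i ∈ Set.Icc c d <;> simp [h, Set.indicator_apply]

lemma integral_indicator_Icc (c d : ℝ) (hc : 0 ≤ c) (hcd : c ≤ d) (hd : d ≤ 1) :
    ∫ x in Set.Ioo (0:ℝ) 1, Set.indicator (Set.Icc c d) (1 : ℝ → ℝ) x = d - c := by
  rw [MeasureTheory.integral_indicator_one measurableSet_Icc,
    measureReal_def, Measure.restrict_apply measurableSet_Icc]
  have h1 : volume (Set.Icc c d ∩ Set.Ioo 0 1) = ENNReal.ofReal (d - c) := by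
    refine le_antisymm ?_ ?_
    · calc volume (Set.Icc c d ∩ Set.Ioo 0 1) ≤ volume (Set.Icc c d) :=
            measure_mono Set.inter_subset_left
        _ = ENNReal.ofReal (d - c) := Real.volume_Icc
    · calc ENNReal.ofReal (d - c) = volume (Set.Ioo c d) := Real.volume_Ioo.symm
        _ ≤ _ := measure_mono (Set.subset_inter Set.Ioo_subset_Icc_self
            (fun x hx => Set.mem_Ioo.2 ⟨lt_of_le_of_lt hc (Set.mem_Ioo.1 hx).1, lt_of_lt_of_le (Set.mem_Ioo.1 hx).2 hd⟩))
  rw [h1, ENNReal.toReal_ofReal (by linarith)]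

lemma rat_left (c δ : ℝ) (hc : 0 ≤ c) (hδ : 0 < δ) :
    ∃ q : ℚ, 0 ≤ (q:ℝ) ∧ (q:ℝ) ≤ c ∧ c - q < δ := by
  rcases eq_or_lt_of_le hc with h | h
  · exact ⟨0, by simp, by simp [← h], by simp [← h]; linarith⟩
  · obtain ⟨q, h1, h2⟩ := exists_rat_btwn (show max 0 (c - δ) < c from max_lt h (by linarith))
    have := lt_of_le_of_lt (le_max_right 0 (c - δ)) h1
    exact ⟨q, le_trans (le_max_left _ _) h1.le, h2.le, by linarith⟩

lemma rat_right (d δ : ℝ) (hd : d ≤ 1) (hδ : 0 < δ) :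
    ∃ r : ℚ, d ≤ (r:ℝ) ∧ (r:ℝ) ≤ 1 ∧ (r:ℝ) - d < δ := by
  rcases eq_or_lt_of_le hd with h | h
  · exact ⟨1, by simp [h], by simp, by simp [h]; linarith⟩
  · obtain ⟨r, h1, h2⟩ := exists_rat_btwn (show d < min 1 (d + δ) from lt_min h (by linarith))
    have := lt_of_lt_of_le h2 (min_le_right 1 (d + δ))
    exact ⟨r, h1.le, (lt_of_lt_of_le h2 (min_le_left _ _)).le, by linarith⟩

lemma card_filter_mono (x : ℕ → ℝ) {c d c' d' : ℝ} (h1 : c' ≤ c) (h2 : d ≤ d') (n : ℕ) :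
    (((Finset.range n).filter fun k => x k ∈ Set.Icc c d).card : ℝ) / n
      ≤ (((Finset.range n).filter fun k => x k ∈ Set.Icc c' d').card : ℝ) / n := by
  rw [div_eq_mul_inv, div_eq_mul_inv]
  refine mul_le_mul_of_nonneg_right ?_ (by positivity)
  exact_mod_cast Finset.card_le_card
    (Finset.monotone_filter_right _ (fun k _ hk => Set.Icc_subset_Icc h1 h2 hk))

lemma ae_ud {Ω : Type*} [MeasurableSpace Ω] (P : Measure Ω) [IsProbabilityMeasure P]
    (X : ℕ → Ω → ℝ) (hmeas : ∀ k, Measurable (X k))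
    (hindep : ProbabilityTheory.iIndepFun X P)
    (hunif : ∀ k, Measure.map (X k) P = volume.restrict (Set.Ioo 0 1)) :
    ∀ᵐ ω ∂P, IsUniformlyDistributed (fun k => X k ω) := by
  have key : ∀ q r : ℚ, 0 ≤ (q:ℝ) → (q:ℝ) ≤ r → (r:ℝ) ≤ 1 →
      ∀ᵐ ω ∂P, Tendsto (fun n : ℕ =>
        (((Finset.range n).filter fun k => X k ω ∈ Set.Icc (q:ℝ) (r:ℝ)).card : ℝ) / n)
        atTop (nhds ((r:ℝ) - q)) := by
    intro q r h1 h2 h3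
    have hind : Measurable (Set.indicator (Set.Icc (q:ℝ) (r:ℝ)) (1 : ℝ → ℝ)) :=
      measurable_const.indicator measurableSet_Icc
    have hint : IntegrableOn (Set.indicator (Set.Icc (q:ℝ) (r:ℝ)) (1 : ℝ → ℝ)) (Set.Ioo 0 1) :=
      (integrable_const 1).indicator measurableSet_Icc
    have h := slln_aux P X hmeas hindep hunif _ hind hint id Function.injective_id
    rw [integral_indicator_Icc _ _ h1 h2 h3] at h
    filter_upwards [h] with ω hω
    exact hω.congr fun n => by rw [← count_eq_sum]; rfl
  have key2 : ∀ᵐ ω ∂P, ∀ q r : ℚ, 0 ≤ (q:ℝ) → (q:ℝ) ≤ r → (r:ℝ) ≤ 1 →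
      Tendsto (fun n : ℕ =>
        (((Finset.range n).filter fun k => X k ω ∈ Set.Icc (q:ℝ) (r:ℝ)).card : ℝ) / n)
        atTop (nhds ((r:ℝ) - q)) := by
    rw [ae_all_iff]; intro q; rw [ae_all_iff]; intro r
    by_cases h : 0 ≤ (q:ℝ) ∧ (q:ℝ) ≤ r ∧ (r:ℝ) ≤ 1
    · filter_upwards [key q r h.1 h.2.1 h.2.2] with ω hω _ _ _; exact hω
    · filter_upwards with ω h1 h2 h3; exact absurd ⟨h1, h2, h3⟩ h
  filter_upwards [key2] with ω hω
  intro c d hc hcd hd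
  refine tendsto_order.2 ⟨?_, ?_⟩
  · intro b hb
    rcases lt_or_ge b 0 with hb0 | hb0
    · filter_upwards with n
      exact lt_of_lt_of_le hb0 (by positivity)
    · have hδ : 0 < (d - c - b)/2 := by linarith
      set δ := (d - c - b)/2 with hδdef
      obtain ⟨q, hq1, hq2⟩ := exists_rat_btwn (show c < c + δ by linarith)
      obtain ⟨r, hr1, hr2⟩ := exists_rat_btwn (show d - δ < d by linarith)
      have hqr : (q:ℝ) ≤ r := by linarith
      have ht := hω q r (by linarith) hqr (by linarith)
      have hbr : b < (r:ℝ) - q := by linarith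
      filter_upwards [ht.eventually (eventually_gt_nhds hbr)] with n hn
      exact lt_of_lt_of_le hn (card_filter_mono _ hq1.le hr2.le n)
  · intro b hb
    have hδ : 0 < (b - (d - c))/2 := by linarith
    set δ := (b - (d - c))/2 with hδdef
    obtain ⟨q, hq0, hq1, hq2⟩ := rat_left c δ hc hδ
    obtain ⟨r, hr1, hr2, hr3⟩ := rat_right d δ hd hδ
    have ht := hω q r hq0 (by linarith) hr2
    have hbr : (r:ℝ) - q < b := by linarith
    filter_upwards [ht.eventually (eventually_lt_nhds hbr)] with n hn
    exact lt_of_le_of_lt (card_filter_mono _ hq1 hr1 n) hn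

/-- Theorem 3.3: almost every sequence `(x_k) ∈ (0,1)^∞` simultaneously satisfies:
(1) `f(x_n)/n → 0`; (2) `lim_N (1/N)∑_{k=1}^N f(x_k)` exists;
(3) this limit equals `∫_{(0,1)} f`; (4) `(x_k)` is uniformly distributed in `(0,1)`. -/
theorem ae_four_conditions
    (Ω : Type*) [MeasurableSpace Ω] (P : Measure Ω) [IsProbabilityMeasure P]
    (X : ℕ → Ω → ℝ) (hmeas : ∀ k, Measurable (X k))
    (hindep : ProbabilityTheory.iIndepFun X P)
    (hunif : ∀ k, Measure.map (X k) P = volume.restrict (Set.Ioo 0 1))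
    (f : ℝ → ℝ) (hf_int : IntegrableOn f (Set.Ioo 0 1)) :
    ∀ᵐ ω ∂P,
      Tendsto (fun n : ℕ => f (X n ω) / n) atTop (nhds 0) ∧
      (∃ L : ℝ, Tendsto (fun N : ℕ => (N : ℝ)⁻¹ * ∑ k ∈ Finset.Icc 1 N, f (X k ω))
          atTop (nhds L)) ∧
      Tendsto (fun N : ℕ => (N : ℝ)⁻¹ * ∑ k ∈ Finset.Icc 1 N, f (X k ω))
        atTop (nhds (∫ x in Set.Ioo (0:ℝ) 1, f x)) ∧
      IsUniformlyDistributed (fun k => X k ω) := by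
  have hfm : AEStronglyMeasurable f (volume.restrict (Set.Ioo (0:ℝ) 1)) := hf_int.1
  set g : ℝ → ℝ := hfm.mk f with hg_def
  have hgmeas : Measurable g := hfm.stronglyMeasurable_mk.measurable
  have hfg : f =ᵐ[volume.restrict (Set.Ioo (0:ℝ) 1)] g := hfm.ae_eq_mk
  have hgi : IntegrableOn g (Set.Ioo 0 1) := hf_int.congr hfg
  have haeeq : ∀ᵐ ω ∂P, ∀ k, f (X k ω) = g (X k ω) := by
    rw [ae_all_iff]
    intro k
    have h1 : ∀ᵐ x ∂(Measure.map (X k) P), f x = g x := by rw [hunif k]; exact hfg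
    exact ae_of_ae_map (hmeas k).aemeasurable h1
  have hint_eq : (∫ x in Set.Ioo (0:ℝ) 1, f x) = ∫ x in Set.Ioo (0:ℝ) 1, g x :=
    integral_congr_ae hfg
  have hslln0 := slln_aux P X hmeas hindep hunif g hgmeas hgi id Function.injective_id
  have hslln1 := slln_aux P X hmeas hindep hunif g hgmeas hgi (· + 1)
    (fun a b h => by simpa using h)
  have hud := ae_ud P X hmeas hindep hunif
  filter_upwards [hslln0, hslln1, hud, haeeq] with ω h0 h1 hu heq
  set I := ∫ x in Set.Ioo (0:ℝ) 1, g x with hI_def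
  -- sums over Icc 1 N equal shifted range sums
  have hsum : ∀ N : ℕ, ∑ k ∈ Finset.Icc 1 N, f (X k ω)
      = ∑ i ∈ Finset.range N, g (X (i + 1) ω) := by
    intro N
    rw [← Finset.Ico_add_one_right_eq_Icc, Finset.sum_Ico_eq_sum_range]
    simp only [Nat.add_sub_cancel]
    exact Finset.sum_congr rfl fun i _ => by rw [heq, Nat.add_comm]
  have h3 : Tendsto (fun N : ℕ => (N : ℝ)⁻¹ * ∑ k ∈ Finset.Icc 1 N, f (X k ω))
      atTop (nhds (∫ x in Set.Ioo (0:ℝ) 1, f x)) := by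
    rw [hint_eq]
    exact h1.congr fun n => by rw [hsum n, div_eq_inv_mul]
  -- condition (1)
  have hquot : Tendsto (fun n : ℕ => ((n : ℝ) + 1) / n) atTop (nhds 1) := by
    have := (tendsto_const_nhds (x := (1:ℝ)) (f := atTop (α := ℕ))).add
      tendsto_one_div_atTop_nhds_zero_nat
    rw [add_zero] at this
    refine this.congr' ?_
    filter_upwards [eventually_ge_atTop 1] with n hn
    have hn' : (n : ℝ) ≠ 0 := Nat.cast_ne_zero.2 (by omega)
    field_simp
  have hA : Tendsto (fun n : ℕ => (∑ i ∈ Finset.range (n + 1), g (X i ω)) / n)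
      atTop (nhds I) := by
    have hcomp : Tendsto (fun n : ℕ =>
        (∑ i ∈ Finset.range (n + 1), g (X i ω)) / (n + 1)) atTop (nhds I) := by
      have := h0.comp (tendsto_add_atTop_nat 1)
      exact this.congr fun n => by simp [Function.comp]
    have := hcomp.mul hquot
    rw [mul_one] at this
    refine this.congr' ?_
    filter_upwards [eventually_ge_atTop 1] with n hn
    have hn' : (n : ℝ) ≠ 0 := Nat.cast_ne_zero.2 (by omega)
    have hn1 : (n : ℝ) + 1 ≠ 0 := by positivity
    field_simp
  have hcond1 : Tendsto (fun n : ℕ => f (X n ω) / n) atTop (nhds 0) := by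
    simp only [id_eq] at h0
    have hdiff := hA.sub h0
    rw [sub_self] at hdiff
    refine hdiff.congr fun n => ?_
    rw [← sub_div, Finset.sum_range_succ, heq n]
    ring_nf
  exact ⟨hcond1, ⟨_, h3⟩, h3, hu⟩
end

section
/- For every irrational α, the sequence ({nα})_{n∈ℕ} of fractional parts is uniformly distributed in (0,1). -/
open Filter MeasureTheory AddCircle Finset

private lemma coe_fract_eq (x : ℝ) : ((Int.fract x : ℝ) : AddCircle (1 : ℝ)) = (x : AddCircle (1 : ℝ)) := by
  have h0 : (((⌊x⌋ : ℝ)) : AddCircle (1 : ℝ)) = 0 := by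
    rw [AddCircle.coe_eq_zero_iff]
    exact ⟨⌊x⌋, by simp⟩
  rw [Int.fract, QuotientAddGroup.mk_sub, h0, sub_zero]

private lemma fourier_pow (m : ℤ) (α : ℝ) (k : ℕ) :
    fourier m (((k : ℝ) * α : ℝ) : AddCircle (1 : ℝ)) = (fourier m ((α : ℝ) : AddCircle (1 : ℝ))) ^ k := by
  rw [fourier_coe_apply, fourier_coe_apply, ← Complex.exp_nat_mul]
  congr 1
  push_cast
  ring

private lemma fourier_ne_one {α : ℝ} (hα : Irrational α) {m : ℤ} (hm : m ≠ 0) :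
    fourier m ((α : ℝ) : AddCircle (1 : ℝ)) ≠ 1 := by
  rw [fourier_coe_apply]
  intro h
  obtain ⟨n, hn⟩ := Complex.exp_eq_one_iff.mp h
  have h2 : (2 * (Real.pi : ℂ) * Complex.I) ≠ 0 := by
    simp [Real.pi_ne_zero, Complex.I_ne_zero]
  have hn' : (2 * (Real.pi : ℂ) * Complex.I) * ((m : ℂ) * (α : ℂ)) =
      (2 * (Real.pi : ℂ) * Complex.I) * (n : ℂ) := by
    rw [Complex.ofReal_one, div_one] at hn
    linear_combination hn
  have hma : (m : ℂ) * (α : ℂ) = (n : ℂ) := mul_left_cancel₀ h2 hn'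
  have hre : (m : ℝ) * α = (n : ℝ) := by
    have := congrArg Complex.re hma
    simpa using this
  have : α = (n : ℝ) / (m : ℝ) := by
    field_simp at hre ⊢
    linarith [hre]
  have h3 : α = (((n : ℚ) / (m : ℚ) : ℚ) : ℝ) := by push_cast; exact this
  exact (Rat.not_irrational _) (h3 ▸ hα)

example : True := trivial

noncomputable def weylAvg (α : ℝ) (f : C(AddCircle (1 : ℝ), ℂ)) (n : ℕ) : ℂ :=
  (∑ k ∈ Finset.range n, f (((k : ℝ) * α : ℝ) : AddCircle (1 : ℝ))) / n

private lemma integral_fourier_zero {m : ℤ} (hm : m ≠ 0) :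
    ∫ z, fourier m z ∂(haarAddCircle (T := 1)) = 0 := by
  convert integral_eq_zero_of_add_right_eq_neg (μ := haarAddCircle)
    (fourier_add_half_inv_index hm one_pos)

private lemma avg_fourier (α : ℝ) (hα : Irrational α) (m : ℤ) :
    Tendsto (weylAvg α (fourier m)) atTop
      (nhds (∫ z, fourier m z ∂(haarAddCircle (T := 1)))) := by
  rcases eq_or_ne m 0 with rfl | hm
  · have hint : ∫ z, fourier (0:ℤ) z ∂(haarAddCircle (T := 1)) = 1 := by
      simp [fourier_zero]
    rw [hint]
    have hev : ∀ᶠ n : ℕ in atTop, (1 : ℂ) = weylAvg α (fourier 0) n := by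
      filter_upwards [eventually_ge_atTop 1] with n hn
      have hn0 : (n : ℂ) ≠ 0 := by exact_mod_cast (Nat.one_le_iff_ne_zero.mp hn)
      simp only [weylAvg, fourier_zero, Finset.sum_const, Finset.card_range, nsmul_eq_mul,
        mul_one]
      rw [div_self hn0]
    exact Tendsto.congr' hev tendsto_const_nhds
  · rw [integral_fourier_zero hm]
    set z := fourier m ((α : ℝ) : AddCircle (1 : ℝ)) with hz
    have hz1 : z ≠ 1 := fourier_ne_one hα hm
    have hznorm : ‖z‖ = 1 := by
      rw [hz, fourier_coe_apply, Complex.norm_exp]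
      have : (2 * (Real.pi:ℂ) * Complex.I * m * α / (1:ℝ)).re = 0 := by
        simp [Complex.div_re, Complex.mul_re, Complex.mul_im]
      rw [this, Real.exp_zero]
    apply squeeze_zero_norm (a := fun n : ℕ => (2 / ‖z - 1‖) / n)
    · intro n
      have hsum : weylAvg α (fourier m) n = ((z ^ n - 1) / (z - 1)) / n := by
        unfold weylAvg
        congr 1
        rw [← geom_sum_eq hz1]
        exact Finset.sum_congr rfl fun k _ => fourier_pow m α k
      have h2 : ‖z ^ n - 1‖ ≤ 2 := by
        calc ‖z ^ n - 1‖ ≤ ‖z ^ n‖ + ‖(1:ℂ)‖ := norm_sub_le _ _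
          _ = 2 := by rw [norm_pow, hznorm]; norm_num
      rw [hsum, norm_div, norm_div, Complex.norm_natCast]
      gcongr
    · exact tendsto_const_div_atTop_nhds_zero_nat _

private lemma cm_integrable (f : C(AddCircle (1:ℝ), ℂ)) : Integrable f (haarAddCircle (T := 1)) :=
  f.continuous.integrable_of_hasCompactSupport (HasCompactSupport.of_compactSpace _)

private def WeylSet (α : ℝ) : Set C(AddCircle (1 : ℝ), ℂ) :=
  {f | Tendsto (weylAvg α f) atTop (nhds (∫ z, f z ∂(haarAddCircle (T := 1))))}

private noncomputable def weylSubmodule (α : ℝ) : Submodule ℂ C(AddCircle (1 : ℝ), ℂ) where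
  carrier := WeylSet α
  zero_mem' := by
    have h1 : weylAvg α 0 = fun _ : ℕ => (0 : ℂ) := by
      funext n; simp [weylAvg]
    have h2 : ∫ z, (0 : C(AddCircle (1:ℝ), ℂ)) z ∂(haarAddCircle (T := 1)) = 0 := by
      simp
    show Tendsto _ _ _
    rw [h1, h2]
    exact tendsto_const_nhds
  add_mem' := by
    intro f g hf hg
    have h1 : (fun n => weylAvg α f n + weylAvg α g n) = weylAvg α (f + g) := by
      funext n
      simp [weylAvg, Finset.sum_add_distrib, add_div]
    have h2 : ∫ z, (f + g) z ∂(haarAddCircle (T := 1)) =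
        (∫ z, f z ∂(haarAddCircle (T := 1))) + ∫ z, g z ∂(haarAddCircle (T := 1)) := by
      simp only [ContinuousMap.add_apply]
      exact integral_add (cm_integrable f) (cm_integrable g)
    show Tendsto _ _ _
    rw [← h1, h2]
    exact hf.add hg
  smul_mem' := by
    intro c f hf
    have h1 : (fun n => c * weylAvg α f n) = weylAvg α (c • f) := by
      funext n
      simp only [weylAvg, ContinuousMap.smul_apply, smul_eq_mul]
      rw [← Finset.mul_sum, mul_div_assoc]
    have h2 : ∫ z, (c • f) z ∂(haarAddCircle (T := 1)) =
        c * ∫ z, f z ∂(haarAddCircle (T := 1)) := by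
      simp only [ContinuousMap.smul_apply, smul_eq_mul]
      exact integral_const_mul c _
    show Tendsto _ _ _
    rw [← h1, h2]
    exact hf.const_mul c

private lemma weylSet_closure (α : ℝ) : closure (WeylSet α) ⊆ WeylSet α := by
  intro f hf
  rw [WeylSet, Set.mem_setOf_eq, Metric.tendsto_atTop]
  intro ε hε
  obtain ⟨g, hgS, hfg⟩ := Metric.mem_closure_iff.mp hf (ε / 4) (by linarith)
  obtain ⟨N, hN⟩ := Metric.tendsto_atTop.mp hgS (ε / 4) (by linarith)
  refine ⟨max N 1, fun n hn => ?_⟩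
  have hn1 : (1 : ℕ) ≤ n := le_trans (le_max_right _ _) hn
  have hnN : N ≤ n := le_trans (le_max_left _ _) hn
  have hn0 : (0 : ℝ) < n := by exact_mod_cast hn1
  have hb1 : dist (weylAvg α f n) (weylAvg α g n) ≤ dist f g := by
    rw [weylAvg, weylAvg, dist_eq_norm, div_sub_div_same, ← Finset.sum_sub_distrib,
      norm_div, Complex.norm_natCast]
    have hb : ‖∑ k ∈ Finset.range n,
        (f (((k : ℝ) * α : ℝ) : AddCircle (1:ℝ)) - g (((k : ℝ) * α : ℝ) : AddCircle (1:ℝ)))‖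
        ≤ n * dist f g := by
      refine (norm_sum_le _ _).trans ?_
      calc ∑ k ∈ Finset.range n, ‖f (((k : ℝ) * α : ℝ) : AddCircle (1:ℝ))
            - g (((k : ℝ) * α : ℝ) : AddCircle (1:ℝ))‖
          ≤ ∑ _k ∈ Finset.range n, dist f g := by
            refine Finset.sum_le_sum fun k _ => ?_
            rw [← dist_eq_norm]
            exact ContinuousMap.dist_apply_le_dist _
        _ = n * dist f g := by rw [Finset.sum_const, Finset.card_range, nsmul_eq_mul]
    calc _ ≤ ((n : ℝ) * dist f g) / n := by gcongr
      _ = dist f g := by field_simp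
  have hb3 : dist (∫ z, g z ∂(haarAddCircle (T := 1))) (∫ z, f z ∂(haarAddCircle (T := 1)))
      ≤ dist f g := by
    rw [dist_eq_norm, ← integral_sub (cm_integrable g) (cm_integrable f)]
    have := norm_integral_le_of_norm_le_const (μ := haarAddCircle (T := 1))
      (f := fun z => g z - f z) (C := dist g f)
      (Eventually.of_forall fun z => by
        rw [← dist_eq_norm]; exact ContinuousMap.dist_apply_le_dist z)
    simpa [dist_comm] using this
  calc dist (weylAvg α f n) (∫ z, f z ∂(haarAddCircle (T := 1)))
      ≤ dist (weylAvg α f n) (weylAvg α g n) + dist (weylAvg α g n)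
          (∫ z, g z ∂(haarAddCircle (T := 1)))
        + dist (∫ z, g z ∂(haarAddCircle (T := 1))) (∫ z, f z ∂(haarAddCircle (T := 1))) :=
      dist_triangle4 _ _ _ _
    _ < ε / 4 + ε / 4 + ε / 4 :=
        add_lt_add (add_lt_add (hb1.trans_lt hfg) (hN n hnN)) (hb3.trans_lt hfg)
    _ < ε := by linarith

private lemma avg_tendsto (α : ℝ) (hα : Irrational α) (f : C(AddCircle (1 : ℝ), ℂ)) :
    Tendsto (weylAvg α f) atTop (nhds (∫ z, f z ∂(haarAddCircle (T := 1)))) := by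
  have hspan : Submodule.span ℂ (Set.range (fourier (T := 1))) ≤ weylSubmodule α := by
    rw [Submodule.span_le]
    rintro _ ⟨m, rfl⟩
    exact avg_fourier α hα m
  have hmem : f ∈ (Submodule.span ℂ (Set.range (fourier (T := 1)))).topologicalClosure := by
    rw [span_fourier_closure_eq_top]
    trivial
  have hclos : f ∈ closure (WeylSet α) := by
    have h1 : f ∈ closure ((Submodule.span ℂ (Set.range (fourier (T := 1)))) : Set _) := hmem
    exact closure_mono hspan h1
  exact weylSet_closure α hclos

private lemma real_avg_tendsto (α : ℝ) (hα : Irrational α) (f : ℝ → ℝ)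
    (hf : Continuous f) (h01 : f 0 = f 1) :
    Tendsto (fun n : ℕ => (∑ k ∈ Finset.range n, f (Int.fract ((k : ℝ) * α))) / n) atTop
      (nhds (∫ x in (0:ℝ)..1, f x)) := by
  set g : ℝ → ℂ := fun x => (f x : ℂ) with hg
  have hcont : Continuous (AddCircle.liftIco 1 0 g) := by
    apply AddCircle.liftIco_continuous
    · simp only [g, zero_add]
      exact_mod_cast congrArg (Complex.ofReal) h01
    · exact (Complex.continuous_ofReal.comp hf).continuousOn
  set F : C(AddCircle (1:ℝ), ℂ) := ⟨AddCircle.liftIco 1 0 g, hcont⟩ with hF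
  have key := avg_tendsto α hα F
  have hFx : ∀ x : ℝ, F ((x : ℝ) : AddCircle (1:ℝ)) = (f (Int.fract x) : ℂ) := by
    intro x
    have h1 : ((x : ℝ) : AddCircle (1:ℝ)) = ((Int.fract x : ℝ) : AddCircle (1:ℝ)) :=
      (coe_fract_eq x).symm
    rw [h1]
    show AddCircle.liftIco 1 0 g _ = _
    rw [AddCircle.liftIco_coe_apply (by
      rw [zero_add]
      exact ⟨Int.fract_nonneg x, Int.fract_lt_one x⟩)]
  have hint : ∫ z, F z ∂(haarAddCircle (T := 1)) = ((∫ x in (0:ℝ)..1, f x : ℝ) : ℂ) := by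
    have hvol : (volume : Measure (AddCircle (1:ℝ))) = haarAddCircle := by
      rw [volume_eq_smul_haarAddCircle]; simp
    have hpre := AddCircle.intervalIntegral_preimage 1 0 (fun z => F z)
    rw [zero_add] at hpre
    rw [← hvol, ← hpre]
    have hEq : Set.EqOn (fun x : ℝ => F ((x : ℝ) : AddCircle (1:ℝ)))
        (fun x : ℝ => ((f x : ℝ) : ℂ)) (Set.uIcc 0 1) := by
      intro x hx
      rw [Set.uIcc_of_le (by norm_num : (0:ℝ) ≤ 1)] at hx
      simp only
      rw [hFx x]
      rcases lt_or_eq_of_le hx.2 with h | h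
      · rw [Int.fract_eq_self.mpr ⟨hx.1, h⟩]
      · rw [h]
        norm_num [h01]
    rw [intervalIntegral.integral_congr hEq]
    exact intervalIntegral.integral_ofReal
  have hre : ∀ n : ℕ, (weylAvg α F n).re
      = (∑ k ∈ Finset.range n, f (Int.fract ((k : ℝ) * α))) / n := by
    intro n
    rw [weylAvg]
    have hsum : ∑ k ∈ Finset.range n, F (((k : ℝ) * α : ℝ) : AddCircle (1:ℝ))
        = ((∑ k ∈ Finset.range n, f (Int.fract ((k : ℝ) * α)) : ℝ) : ℂ) := by
      rw [Complex.ofReal_sum]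
      exact Finset.sum_congr rfl fun k _ => hFx _
    rw [hsum, show ((n : ℕ) : ℂ) = (((n : ℕ) : ℝ) : ℂ) by norm_cast,
      ← Complex.ofReal_div, Complex.ofReal_re]
  have hcomp := (Complex.continuous_re.tendsto _).comp key
  rw [hint] at hcomp
  exact Tendsto.congr hre (by rw [Complex.ofReal_re] at hcomp; exact hcomp)

/-- lower trapezoid -/
private noncomputable def flo (c d δ x : ℝ) : ℝ := max 0 (min 1 (min ((x - c)/δ) ((d - x)/δ)))

/-- basic bump -/
private noncomputable def gup (c d δ x : ℝ) : ℝ := max 0 (min 1 (min ((x - c + δ)/δ) ((d + δ - x)/δ)))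

/-- upper function, periodized -/
private noncomputable def fup (c d δ x : ℝ) : ℝ := min 1 (gup c d δ x + gup c d δ (x-1) + gup c d δ (x+1))

private lemma flo_continuous (c d δ : ℝ) : Continuous (flo c d δ) := by
  unfold flo
  fun_prop

private lemma gup_continuous (c d δ : ℝ) : Continuous (gup c d δ) := by
  unfold gup
  fun_prop

private lemma fup_continuous (c d δ : ℝ) : Continuous (fup c d δ) := by
  unfold fup
  have := gup_continuous c d δ
  fun_prop

private lemma flo_nonneg (c d δ x : ℝ) : 0 ≤ flo c d δ x := le_max_left _ _

private lemma flo_le_one (c d δ x : ℝ) : flo c d δ x ≤ 1 :=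
  max_le zero_le_one (min_le_left _ _)

private lemma gup_nonneg (c d δ x : ℝ) : 0 ≤ gup c d δ x := le_max_left _ _

private lemma gup_le_one (c d δ x : ℝ) : gup c d δ x ≤ 1 :=
  max_le zero_le_one (min_le_left _ _)

private lemma fup_nonneg (c d δ x : ℝ) : 0 ≤ fup c d δ x := by
  unfold fup
  have h1 := gup_nonneg c d δ x
  have h2 := gup_nonneg c d δ (x-1)
  have h3 := gup_nonneg c d δ (x+1)
  refine le_min zero_le_one (by linarith)

private lemma gup_eq_zero {c d δ : ℝ} (hδ : 0 < δ) {x : ℝ}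
    (h : x ≤ c - δ ∨ d + δ ≤ x) : gup c d δ x = 0 := by
  unfold gup
  rcases h with h | h
  · have : (x - c + δ)/δ ≤ 0 := div_nonpos_of_nonpos_of_nonneg (by linarith) hδ.le
    have hm : min ((x - c + δ)/δ) ((d + δ - x)/δ) ≤ 0 := (min_le_left _ _).trans this
    exact max_eq_left ((min_le_right _ _).trans hm)
  · have : (d + δ - x)/δ ≤ 0 := div_nonpos_of_nonpos_of_nonneg (by linarith) hδ.le
    have hm : min ((x - c + δ)/δ) ((d + δ - x)/δ) ≤ 0 := (min_le_right _ _).trans this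
    exact max_eq_left ((min_le_right _ _).trans hm)

private lemma gup_eq_one {c d δ : ℝ} (hδ : 0 < δ) {x : ℝ} (h1 : c ≤ x) (h2 : x ≤ d) :
    gup c d δ x = 1 := by
  unfold gup
  have ha : (1:ℝ) ≤ (x - c + δ)/δ := (one_le_div hδ).mpr (by linarith)
  have hb : (1:ℝ) ≤ (d + δ - x)/δ := (one_le_div hδ).mpr (by linarith)
  rw [min_eq_left (le_min ha hb), max_eq_right zero_le_one]

private lemma flo_eq_zero {c d δ : ℝ} (hδ : 0 < δ) {x : ℝ}
    (h : x ≤ c ∨ d ≤ x) : flo c d δ x = 0 := by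
  unfold flo
  rcases h with h | h
  · have : (x - c)/δ ≤ 0 := div_nonpos_of_nonpos_of_nonneg (by linarith) hδ.le
    exact max_eq_left ((min_le_right _ _).trans ((min_le_left _ _).trans this))
  · have : (d - x)/δ ≤ 0 := div_nonpos_of_nonpos_of_nonneg (by linarith) hδ.le
    exact max_eq_left ((min_le_right _ _).trans ((min_le_right _ _).trans this))

private lemma flo_eq_one {c d δ : ℝ} (hδ : 0 < δ) {x : ℝ} (h1 : c + δ ≤ x) (h2 : x ≤ d - δ) :
    flo c d δ x = 1 := by
  unfold flo
  have ha : (1:ℝ) ≤ (x - c)/δ := (one_le_div hδ).mpr (by linarith)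
  have hb : (1:ℝ) ≤ (d - x)/δ := (one_le_div hδ).mpr (by linarith)
  rw [min_eq_left (le_min ha hb), max_eq_right zero_le_one]

private lemma flo_boundary {c d δ : ℝ} (hδ : 0 < δ) (hc : 0 ≤ c) (hd : d ≤ 1) :
    flo c d δ 0 = flo c d δ 1 := by
  rw [flo_eq_zero hδ (Or.inl hc), flo_eq_zero hδ (Or.inr hd)]

private lemma fup_boundary {c d δ : ℝ} (hδ : 0 < δ) (hδ2 : δ ≤ 1/2) (hc : 0 ≤ c) (hd : d ≤ 1) :
    fup c d δ 0 = fup c d δ 1 := by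
  unfold fup
  have hm1 : gup c d δ (0 - 1) = 0 := gup_eq_zero hδ (Or.inl (by linarith))
  have h2 : gup c d δ (1 + 1) = 0 := gup_eq_zero hδ (Or.inr (by linarith))
  rw [hm1, h2]
  norm_num
  ring_nf

private lemma indicator_le_fup {c d δ : ℝ} (hδ : 0 < δ) {y : ℝ} :
    (if y ∈ Set.Icc c d then (1:ℝ) else 0) ≤ fup c d δ y := by
  split_ifs with h
  · unfold fup
    have h1 : gup c d δ y = 1 := gup_eq_one hδ h.1 h.2
    have h2 := gup_nonneg c d δ (y-1)
    have h3 := gup_nonneg c d δ (y+1)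
    exact le_min le_rfl (by linarith)
  · exact fup_nonneg c d δ y

private lemma flo_le_indicator {c d δ : ℝ} (hδ : 0 < δ) {y : ℝ} :
    flo c d δ y ≤ (if y ∈ Set.Icc c d then (1:ℝ) else 0) := by
  split_ifs with h
  · exact flo_le_one c d δ y
  · rw [flo_eq_zero hδ ?_]
    rw [Set.mem_Icc, not_and_or, not_le, not_le] at h
    exact h.imp le_of_lt le_of_lt

private lemma fup_integral_le {c d δ : ℝ} (hc : 0 ≤ c) (hcd : c ≤ d) (hd : d ≤ 1)
    (hδ : 0 < δ) (hδ2 : δ ≤ 1/2) :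
    ∫ x in (0:ℝ)..1, fup c d δ x ≤ d - c + 2*δ := by
  have hgc := gup_continuous c d δ
  have hii : ∀ a b : ℝ, IntervalIntegrable (gup c d δ) volume a b :=
    fun a b => (hgc.intervalIntegrable a b)
  have hsumc : Continuous (fun x : ℝ => gup c d δ x + gup c d δ (x-1) + gup c d δ (x+1)) := by
    fun_prop
  have h1 : ∫ x in (0:ℝ)..1, fup c d δ x
      ≤ ∫ x in (0:ℝ)..1, (gup c d δ x + gup c d δ (x-1) + gup c d δ (x+1)) := by
    apply intervalIntegral.integral_mono_on (by norm_num)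
      ((fup_continuous c d δ).intervalIntegrable 0 1) (hsumc.intervalIntegrable 0 1)
    intro x _
    exact min_le_right _ _
  have h2 : ∫ x in (0:ℝ)..1, (gup c d δ x + gup c d δ (x-1) + gup c d δ (x+1))
      = (∫ x in (0:ℝ)..1, gup c d δ x) + (∫ x in (-1:ℝ)..0, gup c d δ x)
        + (∫ x in (1:ℝ)..2, gup c d δ x) := by
    have hA : IntervalIntegrable (fun x : ℝ => gup c d δ (x-1)) volume 0 1 :=
      ((by fun_prop : Continuous fun x : ℝ => gup c d δ (x-1)).intervalIntegrable 0 1)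
    have hB : IntervalIntegrable (fun x : ℝ => gup c d δ (x+1)) volume 0 1 :=
      ((by fun_prop : Continuous fun x : ℝ => gup c d δ (x+1)).intervalIntegrable 0 1)
    rw [intervalIntegral.integral_add ((hgc.intervalIntegrable 0 1).add hA) hB,
      intervalIntegral.integral_add (hgc.intervalIntegrable 0 1) hA]
    congr 1
    · congr 1
      have := intervalIntegral.integral_comp_sub_right (a := (0:ℝ)) (b := 1) (gup c d δ) 1
      rw [this]
      norm_num
    · have := intervalIntegral.integral_comp_add_right (a := (0:ℝ)) (b := 1) (gup c d δ) 1
      rw [this]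
      norm_num
  have h3 : (∫ x in (0:ℝ)..1, gup c d δ x) + (∫ x in (-1:ℝ)..0, gup c d δ x)
        + (∫ x in (1:ℝ)..2, gup c d δ x) = ∫ x in (-1:ℝ)..2, gup c d δ x := by
    rw [add_comm (∫ x in (0:ℝ)..1, gup c d δ x) (∫ x in (-1:ℝ)..0, gup c d δ x)]
    rw [intervalIntegral.integral_add_adjacent_intervals (hii _ _) (hii _ _),
      intervalIntegral.integral_add_adjacent_intervals (hii _ _) (hii _ _)]
  have h4 : ∫ x in (-1:ℝ)..2, gup c d δ x = (∫ x in (-1:ℝ)..(c-δ), gup c d δ x)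
      + (∫ x in (c-δ)..(d+δ), gup c d δ x) + (∫ x in (d+δ)..(2:ℝ), gup c d δ x) := by
    rw [intervalIntegral.integral_add_adjacent_intervals (hii _ _) (hii _ _),
      intervalIntegral.integral_add_adjacent_intervals (hii _ _) (hii _ _)]
  have hz1 : ∫ x in (-1:ℝ)..(c-δ), gup c d δ x = 0 := by
    rw [intervalIntegral.integral_congr (g := fun _ => (0:ℝ)) ?_, intervalIntegral.integral_const]
    · simp
    · intro x hx
      rw [Set.uIcc_of_le (by linarith)] at hx
      exact gup_eq_zero hδ (Or.inl hx.2)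
  have hz2 : ∫ x in (d+δ)..(2:ℝ), gup c d δ x = 0 := by
    rw [intervalIntegral.integral_congr (g := fun _ => (0:ℝ)) ?_, intervalIntegral.integral_const]
    · simp
    · intro x hx
      rw [Set.uIcc_of_le (by linarith)] at hx
      exact gup_eq_zero hδ (Or.inr hx.1)
  have hmid : ∫ x in (c-δ)..(d+δ), gup c d δ x ≤ d - c + 2*δ := by
    have := intervalIntegral.integral_mono_on (a := c - δ) (b := d + δ)
      (f := gup c d δ) (g := fun _ => (1:ℝ))
      (by linarith) (hii _ _) (intervalIntegrable_const)
      (fun x _ => gup_le_one c d δ x)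
    rw [intervalIntegral.integral_const, smul_eq_mul, mul_one] at this
    linarith
  linarith

private lemma flo_integral_ge {c d δ : ℝ} (hc : 0 ≤ c) (hd : d ≤ 1)
    (hδ : 0 < δ) (h2δ : 2*δ ≤ d - c) :
    d - c - 2*δ ≤ ∫ x in (0:ℝ)..1, flo c d δ x := by
  have hfc := flo_continuous c d δ
  have hii : ∀ a b : ℝ, IntervalIntegrable (flo c d δ) volume a b :=
    fun a b => hfc.intervalIntegrable a b
  have hsplit : ∫ x in (0:ℝ)..1, flo c d δ x = (∫ x in (0:ℝ)..(c+δ), flo c d δ x)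
      + (∫ x in (c+δ)..(d-δ), flo c d δ x) + (∫ x in (d-δ)..(1:ℝ), flo c d δ x) := by
    rw [intervalIntegral.integral_add_adjacent_intervals (hii _ _) (hii _ _),
      intervalIntegral.integral_add_adjacent_intervals (hii _ _) (hii _ _)]
  have hp1 : 0 ≤ ∫ x in (0:ℝ)..(c+δ), flo c d δ x :=
    intervalIntegral.integral_nonneg (by linarith) (fun x _ => flo_nonneg c d δ x)
  have hp3 : 0 ≤ ∫ x in (d-δ)..(1:ℝ), flo c d δ x :=
    intervalIntegral.integral_nonneg (by linarith) (fun x _ => flo_nonneg c d δ x)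
  have hmid : d - c - 2*δ ≤ ∫ x in (c+δ)..(d-δ), flo c d δ x := by
    have := intervalIntegral.integral_mono_on (a := c + δ) (b := d - δ)
      (f := fun _ => (1:ℝ)) (g := flo c d δ)
      (by linarith) intervalIntegrable_const (hii _ _)
      (fun x hx => (flo_eq_one hδ hx.1 hx.2).ge)
    rw [intervalIntegral.integral_const, smul_eq_mul, mul_one] at this
    linarith
  linarith

/-- Weyl's equidistribution theorem: for irrational `α`, the sequence of fractional parts
`({nα})` is uniformly distributed in `(0,1)`. -/
theorem weyl_equidistribution (α : ℝ) (hα : Irrational α) :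
    IsUniformlyDistributed fun n : ℕ => Int.fract ((n : ℝ) * α) := by
  intro c d hc hcd hd1
  show Tendsto (fun n : ℕ =>
      (((Finset.range n).filter fun k : ℕ => Int.fract ((k:ℝ) * α) ∈ Set.Icc c d).card : ℝ) / n)
    atTop (nhds (d - c))
  have hcard : ∀ n : ℕ,
      (((Finset.range n).filter fun k : ℕ => Int.fract ((k:ℝ) * α) ∈ Set.Icc c d).card : ℝ)
      = ∑ k ∈ Finset.range n, (if Int.fract ((k:ℝ)*α) ∈ Set.Icc c d then (1:ℝ) else 0) := by
    intro n
    rw [Finset.card_filter]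
    push_cast
    rfl
  rw [Metric.tendsto_atTop]
  intro ε hε
  set ε' : ℝ := min ε 1 / 2 with hε'def
  have hε'pos : 0 < ε' := by
    have : 0 < min ε 1 := lt_min hε one_pos
    positivity
  have hε'le : ε' ≤ ε / 2 := by
    have : min ε 1 ≤ ε := min_le_left _ _
    rw [hε'def]; linarith
  have hε'1 : ε' ≤ 1 / 2 := by
    have : min ε 1 ≤ 1 := min_le_right _ _
    rw [hε'def]; linarith
  set δ : ℝ := ε' / 4 with hδdef
  have hδ : 0 < δ := by positivity
  have hδ2 : δ ≤ 1/2 := by rw [hδdef]; linarith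
  have hup := real_avg_tendsto α hα (fup c d δ) (fup_continuous c d δ)
    (fup_boundary hδ hδ2 hc hd1)
  have hlo := real_avg_tendsto α hα (flo c d δ) (flo_continuous c d δ)
    (flo_boundary hδ hc hd1)
  obtain ⟨N1, hN1⟩ := Metric.tendsto_atTop.mp hup (ε'/2) (by positivity)
  obtain ⟨N2, hN2⟩ := Metric.tendsto_atTop.mp hlo (ε'/2) (by positivity)
  refine ⟨max (max N1 N2) 1, fun n hn => ?_⟩
  have hn1 : (1:ℕ) ≤ n := le_trans (le_max_right _ _) hn
  have hnN1 : N1 ≤ n := le_trans ((le_max_left _ _).trans (le_max_left _ _)) hn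
  have hnN2 : N2 ≤ n := le_trans ((le_max_right _ _).trans (le_max_left _ _)) hn
  have hn0 : (0:ℝ) < n := by exact_mod_cast hn1
  set A : ℝ :=
    (((Finset.range n).filter fun k : ℕ => Int.fract ((k:ℝ) * α) ∈ Set.Icc c d).card : ℝ) / n
    with hAdef
  have hAnonneg : 0 ≤ A := by
    rw [hAdef]
    positivity
  have hAup : A ≤ (∑ k ∈ Finset.range n, fup c d δ (Int.fract ((k:ℝ)*α))) / n := by
    rw [hAdef, hcard n]
    exact (div_le_div_iff_of_pos_right hn0).mpr
      (Finset.sum_le_sum fun k _ => indicator_le_fup hδ)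
  have hAlo : (∑ k ∈ Finset.range n, flo c d δ (Int.fract ((k:ℝ)*α))) / n ≤ A := by
    rw [hAdef, hcard n]
    exact (div_le_div_iff_of_pos_right hn0).mpr
      (Finset.sum_le_sum fun k _ => flo_le_indicator hδ)
  have h1 := hN1 n hnN1
  have h2 := hN2 n hnN2
  rw [Real.dist_eq, abs_lt] at h1 h2
  have hIup := fup_integral_le hc hcd hd1 hδ hδ2
  have hupper : A < d - c + ε' := by
    have : (∑ k ∈ Finset.range n, fup c d δ (Int.fract ((k:ℝ)*α))) / n
        < (∫ x in (0:ℝ)..1, fup c d δ x) + ε'/2 := by linarith [h1.2]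
    have h2δ : 2*δ = ε'/2 := by rw [hδdef]; ring
    linarith
  have hlower : d - c - ε < A := by
    rcases le_or_gt (d - c) ε' with hsmall | hbig
    · linarith
    · have h2δle : 2*δ ≤ d - c := by rw [hδdef]; linarith
      have hIlo := flo_integral_ge hc hd1 hδ h2δle
      have : (∫ x in (0:ℝ)..1, flo c d δ x) - ε'/2
          < (∑ k ∈ Finset.range n, flo c d δ (Int.fract ((k:ℝ)*α))) / n := by linarith [h2.1]
      have h2δ : 2*δ = ε'/2 := by rw [hδdef]; ring
      linarith
  show dist A (d - c) < ε
  rw [Real.dist_eq, abs_lt]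
  constructor <;> linarith
end
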